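/- arXiv:1912.07075 — 5 statements merged into one kernel-verified Lean document; each statement's English description precedes it below -/
import Mathlib

section
/- Let u ∈ L²_μ(X) and let x^n be points in X such that Z_{x^n} = ‖G_{x^n} − I‖₂ ≤ δ for some δ ∈ [0,1). Then the weighted least-squares projection satisfies ‖u − Q^{x^n}_{V_m} u‖² ≤ ‖u − P_{V_m}u‖² + (1−δ)^{-1} ‖u − P_{V_m}u‖²_{x^n}. -/
open MeasureTheory ProbabilityTheory

noncomputable section

/-- Spectral norm (matrix operator norm w.r.t. the Euclidean norm) of a real square matrix. -/
def specNorm {m : ℕ} (A : Matrix (Fin m) (Fin m) ℝ) : ℝ :=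
  ‖Matrix.toEuclideanCLM (𝕜 := ℝ) A‖

lemma aux_int_mul {α} [MeasurableSpace α] {μ : Measure α} {f g : α → ℝ} (hf : MemLp f 2 μ)
    (hg : MemLp g 2 μ) : Integrable (fun t => f t * g t) μ := by
  have h := hg.smul (𝕜 := ℝ) hf (p := 2) (q := 2) (r := 1)
  rw [memLp_one_iff_integrable] at h
  exact h

lemma aux_quad_le {m : ℕ} (A : Matrix (Fin m) (Fin m) ℝ) (c : Fin m → ℝ) :
    |∑ j, ∑ k, c j * (A j k * c k)| ≤ specNorm A * ∑ j, c j ^ 2 := by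
  set c' : EuclideanSpace ℝ (Fin m) := (WithLp.equiv 2 _).symm c with hc'
  have hT : Matrix.toEuclideanCLM (𝕜 := ℝ) A c' = (WithLp.equiv 2 _).symm (A.mulVec c) := by
    rw [hc']; rfl
  have hinner : (inner ℝ c' (Matrix.toEuclideanCLM (𝕜 := ℝ) A c') : ℝ)
      = ∑ j, ∑ k, c j * (A j k * c k) := by
    rw [hT]
    simp [PiLp.inner_apply, Matrix.mulVec, dotProduct, Finset.mul_sum, hc',
      WithLp.equiv_symm_apply, PiLp.toLp_apply]
    simp_rw [Finset.sum_mul]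
    exact Finset.sum_congr rfl fun j _ => Finset.sum_congr rfl fun k _ => by ring
  have hnorm : ‖c'‖ ^ 2 = ∑ j, c j ^ 2 := by
    rw [EuclideanSpace.norm_eq, Real.sq_sqrt (by positivity)]
    simp [hc', WithLp.equiv_symm_apply, PiLp.toLp_apply, sq_abs]
  calc |∑ j, ∑ k, c j * (A j k * c k)|
      = |(inner ℝ c' (Matrix.toEuclideanCLM (𝕜 := ℝ) A c') : ℝ)| := by rw [hinner]
    _ ≤ ‖c'‖ * ‖Matrix.toEuclideanCLM (𝕜 := ℝ) A c'‖ := abs_real_inner_le_norm _ _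
    _ ≤ ‖c'‖ * (‖Matrix.toEuclideanCLM (𝕜 := ℝ) A‖ * ‖c'‖) := by
        gcongr; exact (Matrix.toEuclideanCLM (𝕜 := ℝ) A).le_opNorm c'
    _ = specNorm A * ‖c'‖ ^ 2 := by rw [specNorm]; ring
    _ = _ := by rw [hnorm]

variable {d : ℕ}

/-- Squared `L²_μ` norm: `‖v‖² = ∫ v² dμ`. -/
def l2normSq {X : Set (Fin d → ℝ)} (μ : Measure X) (v : X → ℝ) : ℝ :=
  ∫ t, v t ^ 2 ∂μ

/-- Squared discrete semi-norm `‖v‖²_{x^n} = (1/n) ∑ᵢ w(xⁱ) v(xⁱ)²`. -/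
def discNormSq {X : Set (Fin d → ℝ)} (w : X → ℝ) {n : ℕ} (x : Fin n → X) (v : X → ℝ) : ℝ :=
  (1 / (n : ℝ)) * ∑ i, w (x i) * v (x i) ^ 2

/-- Empirical Gram matrix `G_{x^n} = (1/n) ∑ᵢ w(xⁱ) φ(xⁱ) ⊗ φ(xⁱ)`. -/
def gram {X : Set (Fin d → ℝ)} {m : ℕ} (w : X → ℝ) (φ : Fin m → X → ℝ) {n : ℕ}
    (x : Fin n → X) : Matrix (Fin m) (Fin m) ℝ :=
  Matrix.of fun j k => (1 / (n : ℝ)) * ∑ i, w (x i) * (φ j (x i) * φ k (x i))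

/-- Stability statistic `Z_{x^n} = ‖G_{x^n} − I‖₂`. -/
def Zstat {X : Set (Fin d → ℝ)} {m : ℕ} (w : X → ℝ) (φ : Fin m → X → ℝ) {n : ℕ}
    (x : Fin n → X) : ℝ :=
  specNorm (gram w φ x - 1)

/-- Orthogonal projection onto `V_m`: `P_{V_m} u = ∑ⱼ (∫ u φⱼ dμ) φⱼ`. -/
def proj {X : Set (Fin d → ℝ)} (μ : Measure X) {m : ℕ} (φ : Fin m → X → ℝ) (u : X → ℝ) :
    X → ℝ :=
  fun t => ∑ j, (∫ s, u s * φ j s ∂μ) * φ j t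

/-- Weighted supremum norm `‖v‖_{∞,w} = sup_x w(x)^{1/2} |v(x)|`. -/
def wSupNorm {X : Set (Fin d → ℝ)} (w : X → ℝ) (v : X → ℝ) : ℝ :=
  ⨆ t : X, Real.sqrt (w t) * |v t|

/-- The approximation space `V_m`, the span of `φ_1, …, φ_m`. -/
def Vspan {X : Set (Fin d → ℝ)} {m : ℕ} (φ : Fin m → X → ℝ) : Submodule ℝ (X → ℝ) :=
  Submodule.span ℝ (Set.range φ)

/-- quasi-optimality of the weighted least-squares projection under
the stability condition `Z_{x^n} ≤ δ`. -/
theorem lsq_quasi_optimality_under_condition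
    {m n : ℕ} {X : Set (Fin d → ℝ)} (μ : Measure X) [IsProbabilityMeasure μ]
    (φ : Fin m → X → ℝ) (hφ2 : ∀ j, MemLp (φ j) 2 μ)
    (hortho : ∀ i j, (∫ t, φ i t * φ j t ∂μ) = if i = j then (1 : ℝ) else 0)
    (w : X → ℝ) (hw : ∀ t, 0 ≤ w t)
    (u : X → ℝ) (hu : MemLp u 2 μ)
    (x : Fin n → X) (δ : ℝ) (hδ0 : 0 ≤ δ) (hδ1 : δ < 1)
    (hZ : Zstat w φ x ≤ δ)
    (Qu : X → ℝ) (hQmem : Qu ∈ Vspan φ)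
    (hQmin : ∀ v ∈ Vspan φ, discNormSq w x (u - Qu) ≤ discNormSq w x (u - v)) :
    l2normSq μ (u - Qu) ≤
      l2normSq μ (u - proj μ φ u) + (1 - δ)⁻¹ * discNormSq w x (u - proj μ φ u) := by
  classical
  set P : X → ℝ := proj μ φ u with hPdef
  set a : Fin m → ℝ := fun j => ∫ s, u s * φ j s ∂μ with hadef
  have hPfun : P = fun t => ∑ j, a j * φ j t := rfl
  have hP2 : MemLp P 2 μ := by
    rw [hPfun]
    exact memLp_finset_sum _ (fun j _ => ((hφ2 j).const_mul _))
  -- P belongs to the span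
  have hPmem : P ∈ Vspan φ := by
    rw [Vspan, Submodule.mem_span_range_iff_exists_fun]
    refine ⟨a, funext fun t => ?_⟩
    simp [hPfun, Finset.sum_apply]
  -- coefficients of P - Qu
  obtain ⟨c, hc⟩ := (Submodule.mem_span_range_iff_exists_fun ℝ).mp
    (Submodule.sub_mem _ hPmem hQmem : P - Qu ∈ Vspan φ)
  set g : X → ℝ := fun t => ∑ j, c j * φ j t with hgdef
  have hgfun : g = P - Qu := by
    funext t
    have := congrFun hc t
    simpa [Finset.sum_apply] using this
  have hg2 : MemLp g 2 μ := by
    rw [hgdef]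
    exact memLp_finset_sum _ (fun j _ => ((hφ2 j).const_mul _))
  have he2 : MemLp (fun t => u t - P t) 2 μ := hu.sub hP2
  -- L² orthogonality of u - P to each φ k
  have horthP : ∀ k, (∫ t, (u t - P t) * φ k t ∂μ) = 0 := by
    intro k
    have h1 : ∀ j, Integrable (fun t => a j * φ j t * φ k t) μ := fun j => by
      simpa [mul_assoc] using aux_int_mul ((hφ2 j).const_mul (a j)) (hφ2 k)
    have h2 : (∫ t, P t * φ k t ∂μ) = a k := by
      have : (∫ t, P t * φ k t ∂μ) = ∑ j, ∫ t, a j * φ j t * φ k t ∂μ := by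
        rw [← integral_finset_sum _ (fun j _ => h1 j)]
        congr 1
        funext t
        rw [hPfun]
        rw [← Finset.sum_mul]
      rw [this]
      have : ∀ j, (∫ t, a j * φ j t * φ k t ∂μ) = a j * ∫ t, φ j t * φ k t ∂μ := by
        intro j
        rw [← integral_const_mul]
        congr 1; funext t; ring
      simp_rw [this, hortho, mul_ite, mul_one, mul_zero]
      simp
    have h3 : Integrable (fun t => u t * φ k t) μ := aux_int_mul hu (hφ2 k)
    have h4 : Integrable (fun t => P t * φ k t) μ := aux_int_mul hP2 (hφ2 k)
    have : (∫ t, (u t - P t) * φ k t ∂μ)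
        = (∫ t, u t * φ k t ∂μ) - ∫ t, P t * φ k t ∂μ := by
      rw [← integral_sub h3 h4]
      congr 1; funext t; ring
    rw [this, h2]
    exact sub_self _
  -- cross term vanishes
  have hcross : (∫ t, (u t - P t) * g t ∂μ) = 0 := by
    have h1 : ∀ j, Integrable (fun t => (u t - P t) * (c j * φ j t)) μ := fun j =>
      aux_int_mul he2 ((hφ2 j).const_mul (c j))
    have : (∫ t, (u t - P t) * g t ∂μ) = ∑ j, ∫ t, (u t - P t) * (c j * φ j t) ∂μ := by
      rw [← integral_finset_sum _ (fun j _ => h1 j)]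
      congr 1; funext t
      rw [hgdef]
      rw [Finset.mul_sum]
    rw [this]
    refine Finset.sum_eq_zero fun j _ => ?_
    have : (∫ t, (u t - P t) * (c j * φ j t) ∂μ) = c j * ∫ t, (u t - P t) * φ j t ∂μ := by
      rw [← integral_const_mul]
      congr 1; funext t; ring
    rw [this, horthP, mul_zero]
  -- ∫ g² = ∑ c²
  have hgsq : (∫ t, g t ^ 2 ∂μ) = ∑ j, c j ^ 2 := by
    have h1 : ∀ j k, Integrable (fun t => c j * φ j t * (c k * φ k t)) μ := fun j k =>
      aux_int_mul ((hφ2 j).const_mul (c j)) ((hφ2 k).const_mul (c k))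
    have step : (∫ t, g t ^ 2 ∂μ)
        = ∫ t, ∑ j, ∑ k, c j * φ j t * (c k * φ k t) ∂μ := by
      congr 1; funext t
      rw [hgdef, sq, Finset.sum_mul_sum]
    rw [step, integral_finset_sum _ (fun j _ =>
      integrable_finset_sum _ (fun k _ => h1 j k))]
    have step2 : ∀ j : Fin m, (∫ t, ∑ k, c j * φ j t * (c k * φ k t) ∂μ)
        = ∑ k, ∫ t, c j * φ j t * (c k * φ k t) ∂μ := fun j =>
      integral_finset_sum _ (fun k _ => h1 j k)
    simp_rw [step2]
    have h2 : ∀ j k : Fin m, (∫ t, c j * φ j t * (c k * φ k t) ∂μ)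
        = c j * c k * ∫ t, φ j t * φ k t ∂μ := by
      intro j k
      rw [← integral_const_mul]
      congr 1; funext t; ring
    simp_rw [h2, hortho, mul_ite, mul_one, mul_zero]
    simp [sq]
  -- L² Pythagoras
  set S : ℝ := ∑ j, c j ^ 2 with hSdef
  have hl2 : l2normSq μ (u - Qu) = l2normSq μ (u - P) + S := by
    have hiee : Integrable (fun t => (u t - P t) ^ 2) μ := he2.integrable_sq
    have higg : Integrable (fun t => g t ^ 2) μ := hg2.integrable_sq
    have hieg : Integrable (fun t => (u t - P t) * g t) μ := aux_int_mul he2 hg2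
    have h5 : Integrable (fun t => 2 * ((u t - P t) * g t) + g t ^ 2) μ :=
      (hieg.const_mul 2).add higg
    have hrw : l2normSq μ (u - Qu)
        = ∫ t, ((u t - P t) ^ 2 + (2 * ((u t - P t) * g t) + g t ^ 2)) ∂μ := by
      rw [l2normSq]
      congr 1; funext t
      have hg' : g t = P t - Qu t := by rw [hgfun]; rfl
      simp only [Pi.sub_apply]
      rw [hg']; ring
    rw [hrw, integral_add hiee h5, integral_add (hieg.const_mul 2) higg,
      integral_const_mul, hcross, hgsq]
    have : l2normSq μ (u - P) = ∫ t, (u t - P t) ^ 2 ∂μ := by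
      rw [l2normSq]; simp
    rw [this]; ring
  -- discrete bilinear form
  set D : (X → ℝ) → (X → ℝ) → ℝ :=
    fun v₁ v₂ => (1 / (n : ℝ)) * ∑ i, w (x i) * (v₁ (x i) * v₂ (x i)) with hDdef
  have hdisc_eq : ∀ v : X → ℝ, discNormSq w x v = D v v := by
    intro v; simp only [discNormSq, hDdef, sq]
  have hDnn : ∀ v : X → ℝ, 0 ≤ D v v := by
    intro v
    simp only [hDdef]
    apply mul_nonneg (by positivity)
    apply Finset.sum_nonneg
    intro i _
    exact mul_nonneg (hw _) (mul_self_nonneg _)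
  -- expansion of the discrete norm at Qu + t • g
  have expand : ∀ t : ℝ, discNormSq w x (u - (Qu + t • g))
      = discNormSq w x (u - Qu) - 2 * t * D (u - Qu) g + t ^ 2 * D g g := by
    intro t
    have key : ∑ i, w (x i) * (u (x i) - (Qu (x i) + t * g (x i))) ^ 2
        = ∑ i, w (x i) * (u (x i) - Qu (x i)) ^ 2
          - (2 * t) * ∑ i, w (x i) * ((u (x i) - Qu (x i)) * g (x i))
          + t ^ 2 * ∑ i, w (x i) * (g (x i) * g (x i)) := by
      rw [Finset.mul_sum, Finset.mul_sum, ← Finset.sum_sub_distrib, ← Finset.sum_add_distrib]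
      exact Finset.sum_congr rfl fun i _ => by ring
    simp only [discNormSq, hDdef, Pi.sub_apply, Pi.add_apply, Pi.smul_apply, smul_eq_mul]
    rw [key]; ring
  -- discrete orthogonality
  have hgmem : g ∈ Vspan φ := by
    rw [hgfun]; exact Submodule.sub_mem _ hPmem hQmem
  have hBg : D (u - Qu) g = 0 := by
    set Bv := D (u - Qu) g with hBv
    set C := D g g with hC
    have hCnn : 0 ≤ C := hDnn g
    have h0 : ∀ t : ℝ, 0 ≤ -2 * t * Bv + t ^ 2 * C := by
      intro t
      have hm : Qu + t • g ∈ Vspan φ :=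
        Submodule.add_mem _ hQmem (Submodule.smul_mem _ t hgmem)
      have := hQmin _ hm
      rw [expand t] at this
      linarith
    by_contra hne
    have hC1 : (0 : ℝ) < C + 1 := by linarith
    have h := h0 (Bv / (C + 1))
    have hB2 : 0 < Bv ^ 2 := by positivity
    have heq : -2 * (Bv / (C + 1)) * Bv + (Bv / (C + 1)) ^ 2 * C
        = -(Bv ^ 2 * (C + 2)) / (C + 1) ^ 2 := by
      field_simp
      ring
    rw [heq] at h
    have h2 : (0 : ℝ) < Bv ^ 2 * (C + 2) := by nlinarith
    have h3 : (0 : ℝ) < (C + 1) ^ 2 := by positivity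
    rcases div_nonneg_iff.mp h with ⟨h4, _⟩ | ⟨_, h5⟩
    · linarith
    · linarith
  -- discrete Pythagoras
  have hPyth : D g g ≤ discNormSq w x (u - P) := by
    have h1 : u - P = u - (Qu + (1 : ℝ) • g) := by
      rw [hgfun, one_smul]; abel
    rw [h1, expand 1, hBg]
    have h2 := hDnn (u - Qu)
    have h3 := hdisc_eq (u - Qu)
    nlinarith
  -- Gram quadratic form identity
  have hCeq : D g g = ∑ j, ∑ k, c j * (gram w φ x j k * c k) := by
    have hpt : ∀ i, w (x i) * (g (x i) * g (x i))
        = ∑ j, ∑ k, c j * (w (x i) * (φ j (x i) * φ k (x i)) * c k) := by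
      intro i
      rw [hgdef, Finset.sum_mul_sum]
      simp_rw [Finset.mul_sum]
      refine Finset.sum_congr rfl fun j _ => Finset.sum_congr rfl fun k _ => by ring
    simp only [hDdef]
    rw [Finset.sum_congr rfl (fun i _ => hpt i)]
    simp_rw [Finset.mul_sum]
    rw [Finset.sum_comm]
    refine Finset.sum_congr rfl fun j _ => ?_
    rw [Finset.sum_comm]
    refine Finset.sum_congr rfl fun k _ => ?_
    symm
    simp only [gram, Matrix.of_apply, Finset.mul_sum, Finset.sum_mul]
    exact Finset.sum_congr rfl fun i _ => by ring
  -- quadratic form bound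
  have hSnn : (0 : ℝ) ≤ S := Finset.sum_nonneg fun j _ => sq_nonneg _
  have hquad : |∑ j, ∑ k, c j * ((gram w φ x - 1) j k * c k)| ≤ δ * S := by
    refine le_trans (aux_quad_le _ _) ?_
    exact mul_le_mul_of_nonneg_right hZ hSnn
  have hsplitG : ∑ j, ∑ k, c j * ((gram w φ x - 1) j k * c k)
      = (∑ j, ∑ k, c j * (gram w φ x j k * c k)) - S := by
    have hterm : ∀ j k : Fin m, c j * ((gram w φ x - 1) j k * c k)
        = c j * (gram w φ x j k * c k)
          - c j * ((1 : Matrix (Fin m) (Fin m) ℝ) j k * c k) := by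
      intro j k
      simp only [Matrix.sub_apply]
      ring
    simp_rw [hterm, Finset.sum_sub_distrib]
    congr 1
    simp [Matrix.one_apply, mul_ite, mul_one, mul_zero, ite_mul, zero_mul,
      Finset.sum_ite_eq, hSdef, sq, mul_comm]
  -- lower bound: (1 - δ) * S ≤ D g g
  have hlow : (1 - δ) * S ≤ D g g := by
    have h1 : -(δ * S) ≤ ∑ j, ∑ k, c j * ((gram w φ x - 1) j k * c k) :=
      neg_le_of_abs_le hquad
    rw [hCeq]
    have := hsplitG
    nlinarith [h1, hsplitG]
  -- conclusion
  have hfin : S ≤ (1 - δ)⁻¹ * discNormSq w x (u - P) := by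
    have h1δ : (0 : ℝ) < 1 - δ := by linarith
    have h2 : (1 - δ) * S ≤ discNormSq w x (u - P) := le_trans hlow hPyth
    calc S = (1 - δ)⁻¹ * ((1 - δ) * S) := by field_simp
      _ ≤ (1 - δ)⁻¹ * discNormSq w x (u - P) := by
          exact mul_le_mul_of_nonneg_left h2 (le_of_lt (inv_pos.mpr h1δ))
  rw [hl2]
  exact (add_le_add_iff_left _).mpr hfin
end
end

section
/- Let x^n = (x^1,…,x^n) be drawn from the product measure ρ^⊗n, where ρ has density w^{-1} with respect to μ. Fix δ ∈ [0,1) and η ∈ [0,1] such that P(Z_{x^n} > δ) ≤ η. Define the conditional estimator Q^{x^n,C}_{V_m} u = Q^{x^n}_{V_m} u if Z_{x^n} ≤ δ and 0 otherwise. Then E(‖u − Q^{x^n,C}_{V_m} u‖²) ≤ (1 + (1−δ)^{-1}) ‖u − P_{V_m}u‖² + η ‖u‖². -/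
open MeasureTheory ProbabilityTheory
open scoped ENNReal NNReal

noncomputable section

variable {d : ℕ}

/- ################# auxiliary lemmas ################# -/

section Aux

variable {X : Set (Fin d → ℝ)} {μ : Measure X} {m n : ℕ} {w : X → ℝ} {φ : Fin m → X → ℝ}
  {u : X → ℝ}

lemma aux_mul_integrable {f g : X → ℝ} (hf : MemLp f 2 μ) (hg : MemLp g 2 μ) :
    Integrable (fun t => f t * g t) μ := by
  have h1 := (hf.add hg).integrable_sq
  have h2 := hf.integrable_sq
  have h3 := hg.integrable_sq
  have : (fun t => f t * g t) = fun t => ((f t + g t)^2 - f t^2 - g t^2)/2 := by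
    funext t; ring
  rw [this]
  exact ((h1.sub h2).sub h3).div_const 2

lemma aux_l2_nonneg (μ : Measure X) (v : X → ℝ) : 0 ≤ l2normSq μ v :=
  integral_nonneg fun t => sq_nonneg _

lemma aux_disc_nonneg (hw : ∀ t, 0 < w t) (y : Fin n → X) (v : X → ℝ) :
    0 ≤ discNormSq w y v := by
  apply mul_nonneg (by positivity)
  exact Finset.sum_nonneg fun i _ => mul_nonneg (hw _).le (sq_nonneg _)

lemma aux_swap3 (f : Fin n → Fin m → Fin m → ℝ) :
    ∑ i, ∑ j, ∑ k, f i j k = ∑ j, ∑ k, ∑ i, f i j k := by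
  rw [Finset.sum_comm]
  exact Finset.sum_congr rfl fun j _ => Finset.sum_comm

lemma aux_quadform (w : X → ℝ) (φ : Fin m → X → ℝ) (y : Fin n → X) (c : Fin m → ℝ) :
    discNormSq w y (fun t => ∑ j, c j * φ j t) = ∑ j, c j * (gram w φ y).mulVec c j := by
  simp only [discNormSq, gram, Matrix.mulVec, dotProduct, Matrix.of_apply, sq,
    Finset.mul_sum, Finset.sum_mul]
  rw [aux_swap3]
  exact Finset.sum_congr rfl fun j _ => Finset.sum_congr rfl fun k _ =>
    Finset.sum_congr rfl fun i _ => by ring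

lemma aux_spec_bound (M : Matrix (Fin m) (Fin m) ℝ) (c : Fin m → ℝ) :
    |∑ j, c j * M.mulVec c j| ≤ specNorm M * ∑ j, c j ^ 2 := by
  set x : EuclideanSpace ℝ (Fin m) := (WithLp.equiv 2 _).symm c with hx
  have hnx : ‖x‖ ^ 2 = ∑ j, c j ^ 2 := by
    rw [EuclideanSpace.norm_eq, Real.sq_sqrt (by positivity)]
    simp [hx, sq_abs]
  have happ : Matrix.toEuclideanCLM (𝕜 := ℝ) M x = (WithLp.equiv 2 _).symm (M.mulVec c) := by
    exact rfl
  have hip : (inner ℝ x (Matrix.toEuclideanCLM (𝕜 := ℝ) M x) : ℝ) = ∑ j, c j * M.mulVec c j := by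
    rw [happ, PiLp.inner_apply]
    simp [hx, RCLike.inner_apply, mul_comm]
  calc |∑ j, c j * M.mulVec c j|
      = |(inner ℝ x (Matrix.toEuclideanCLM (𝕜 := ℝ) M x) : ℝ)| := by rw [hip]
    _ ≤ ‖x‖ * ‖Matrix.toEuclideanCLM (𝕜 := ℝ) M x‖ := abs_real_inner_le_norm _ _
    _ ≤ ‖x‖ * (‖Matrix.toEuclideanCLM (𝕜 := ℝ) M‖ * ‖x‖) := by
        gcongr; exact (Matrix.toEuclideanCLM (𝕜 := ℝ) M).le_opNorm x
    _ = ‖Matrix.toEuclideanCLM (𝕜 := ℝ) M‖ * ‖x‖ ^ 2 := by ring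
    _ = _ := by rw [hnx]; rfl

lemma aux_mem_span {g : X → ℝ} (hg : g ∈ Vspan φ) :
    ∃ c : Fin m → ℝ, g = fun t => ∑ j, c j * φ j t := by
  obtain ⟨c, hc⟩ := (Submodule.mem_span_range_iff_exists_fun ℝ).mp hg
  refine ⟨c, ?_⟩
  funext t
  rw [← hc]
  simp [Finset.sum_apply]

lemma aux_span_memlp (hφ2 : ∀ j, MemLp (φ j) 2 μ) (c : Fin m → ℝ) :
    MemLp (fun t => ∑ j, c j * φ j t) 2 μ := by
  have h := memLp_finset_sum' (μ := μ) (p := 2) Finset.univ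
    (f := fun j => fun t => c j * φ j t) (fun j _ => (hφ2 j).const_mul (c j))
  have heq : (∑ j : Fin m, fun t => c j * φ j t) = fun t => ∑ j, c j * φ j t := by
    funext t; simp [Finset.sum_apply]
  rwa [heq] at h

lemma aux_span_mem (c : Fin m → ℝ) : (fun t => ∑ j, c j * φ j t) ∈ Vspan φ := by
  have h : (fun t => ∑ j, c j * φ j t) = ∑ j, c j • φ j := by
    funext t; simp [Finset.sum_apply]
  rw [h]
  exact Submodule.sum_mem _ fun j _ =>
    Submodule.smul_mem _ _ (Submodule.subset_span ⟨j, rfl⟩)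

lemma aux_span_measurable (hφm : ∀ j, Measurable (φ j)) (c : Fin m → ℝ) :
    Measurable (fun t => ∑ j, c j * φ j t) :=
  Finset.measurable_sum _ fun j _ => (hφm j).const_mul (c j)

lemma aux_l2_span (hφ2 : ∀ j, MemLp (φ j) 2 μ)
    (hortho : ∀ i j, (∫ t, φ i t * φ j t ∂μ) = if i = j then (1 : ℝ) else 0)
    (c : Fin m → ℝ) :
    l2normSq μ (fun t => ∑ j, c j * φ j t) = ∑ j, c j ^ 2 := by
  have hexp : ∀ t : X, (∑ j, c j * φ j t)^2 = ∑ j, ∑ k, (c j * c k) * (φ j t * φ k t) := by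
    intro t
    rw [sq, Finset.sum_mul_sum]
    exact Finset.sum_congr rfl fun j _ => Finset.sum_congr rfl fun k _ => by ring
  have hint : ∀ j k : Fin m, Integrable (fun t => (c j * c k) * (φ j t * φ k t)) μ :=
    fun j k => (aux_mul_integrable (hφ2 j) (hφ2 k)).const_mul _
  calc l2normSq μ (fun t => ∑ j, c j * φ j t)
      = ∫ t, ∑ j, ∑ k, (c j * c k) * (φ j t * φ k t) ∂μ := by
        unfold l2normSq; exact integral_congr_ae (Filter.Eventually.of_forall hexp)
    _ = ∑ j, ∑ k, (c j * c k) * ∫ t, φ j t * φ k t ∂μ := by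
        rw [integral_finset_sum _ fun j _ => integrable_finset_sum _ fun k _ => hint j k]
        exact Finset.sum_congr rfl fun j _ => by
          rw [integral_finset_sum _ fun k _ => hint j k]
          exact Finset.sum_congr rfl fun k _ => integral_const_mul _ _
    _ = ∑ j, c j ^ 2 := by
        refine Finset.sum_congr rfl fun j _ => ?_
        rw [Finset.sum_eq_single j]
        · rw [hortho j j]; simp [sq]
        · intro k _ hk; rw [hortho j k, if_neg (Ne.symm hk)]; ring
        · simp

lemma aux_proj_coeff : proj μ φ u = fun t => ∑ j, (∫ s, u s * φ j s ∂μ) * φ j t := rfl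

lemma aux_proj_memlp (hφ2 : ∀ j, MemLp (φ j) 2 μ) : MemLp (proj μ φ u) 2 μ := by
  rw [aux_proj_coeff]; exact aux_span_memlp hφ2 _

lemma aux_proj_measurable (hφm : ∀ j, Measurable (φ j)) : Measurable (proj μ φ u) := by
  rw [aux_proj_coeff]; exact aux_span_measurable hφm _

lemma aux_proj_mem : proj μ φ u ∈ Vspan φ := by
  rw [aux_proj_coeff]
  exact aux_span_mem _

lemma aux_orth (hφ2 : ∀ j, MemLp (φ j) 2 μ) (hu2 : MemLp u 2 μ)
    (hortho : ∀ i j, (∫ t, φ i t * φ j t ∂μ) = if i = j then (1 : ℝ) else 0)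
    (j : Fin m) :
    ∫ t, (u t - proj μ φ u t) * φ j t ∂μ = 0 := by
  have hPj : (fun t => proj μ φ u t * φ j t)
      = fun t => ∑ k, (∫ s, u s * φ k s ∂μ) * (φ k t * φ j t) := by
    funext t
    rw [aux_proj_coeff]
    rw [Finset.sum_mul]
    exact Finset.sum_congr rfl fun k _ => by ring
  have hintk : ∀ k : Fin m, Integrable (fun t => (∫ s, u s * φ k s ∂μ) * (φ k t * φ j t)) μ :=
    fun k => (aux_mul_integrable (hφ2 k) (hφ2 j)).const_mul _
  have hPint : Integrable (fun t => proj μ φ u t * φ j t) μ := by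
    rw [hPj]; exact integrable_finset_sum _ fun k _ => hintk k
  have huint : Integrable (fun t => u t * φ j t) μ := aux_mul_integrable hu2 (hφ2 j)
  have hsub : (fun t => (u t - proj μ φ u t) * φ j t)
      = fun t => u t * φ j t - proj μ φ u t * φ j t := by funext t; ring
  rw [hsub, integral_sub huint hPint]
  have : ∫ t, proj μ φ u t * φ j t ∂μ = ∫ s, u s * φ j s ∂μ := by
    rw [hPj, integral_finset_sum _ fun k _ => hintk k]
    rw [Finset.sum_eq_single j]
    · rw [integral_const_mul, hortho j j, if_pos rfl, mul_one]
    · intro k _ hk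
      rw [integral_const_mul, hortho k j, if_neg hk, mul_zero]
    · simp
  rw [this, sub_self]

lemma aux_orth_span (hφ2 : ∀ j, MemLp (φ j) 2 μ) (hu2 : MemLp u 2 μ)
    (hortho : ∀ i j, (∫ t, φ i t * φ j t ∂μ) = if i = j then (1 : ℝ) else 0)
    {g : X → ℝ} (hg : g ∈ Vspan φ) :
    ∫ t, (u t - proj μ φ u t) * g t ∂μ = 0 := by
  obtain ⟨b, rfl⟩ := aux_mem_span hg
  have h1 : (fun t => (u t - proj μ φ u t) * ∑ j, b j * φ j t)
      = fun t => ∑ j, b j * ((u t - proj μ φ u t) * φ j t) := by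
    funext t
    rw [Finset.mul_sum]
    exact Finset.sum_congr rfl fun j _ => by ring
  have hp2 : MemLp (fun t => u t - proj μ φ u t) 2 μ := by
    have := hu2.sub (aux_proj_memlp (u := u) hφ2)
    simpa [Pi.sub_def] using this
  have hint : ∀ j : Fin m, Integrable (fun t => b j * ((u t - proj μ φ u t) * φ j t)) μ :=
    fun j => (aux_mul_integrable hp2 (hφ2 j)).const_mul _
  rw [h1, integral_finset_sum _ fun j _ => hint j]
  refine Finset.sum_eq_zero fun j _ => ?_
  rw [integral_const_mul, aux_orth hφ2 hu2 hortho j, mul_zero]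

lemma aux_pyth_l2 (hφ2 : ∀ j, MemLp (φ j) 2 μ) (hu2 : MemLp u 2 μ)
    (hortho : ∀ i j, (∫ t, φ i t * φ j t ∂μ) = if i = j then (1 : ℝ) else 0)
    {g : X → ℝ} (hg : g ∈ Vspan φ) :
    l2normSq μ (u - g) = l2normSq μ (u - proj μ φ u) + l2normSq μ (proj μ φ u - g) := by
  set P := proj μ φ u with hP
  have hPmem : MemLp P 2 μ := aux_proj_memlp hφ2
  have hgmem : MemLp g 2 μ := by
    obtain ⟨c, rfl⟩ := aux_mem_span hg
    exact aux_span_memlp hφ2 c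
  have ha2 : MemLp (fun t => u t - P t) 2 μ := by
    have := hu2.sub hPmem; simpa [Pi.sub_def] using this
  have hb2 : MemLp (fun t => P t - g t) 2 μ := by
    have := hPmem.sub hgmem; simpa [Pi.sub_def] using this
  have hcross : ∫ t, (u t - P t) * (P t - g t) ∂μ = 0 :=
    aux_orth_span hφ2 hu2 hortho (Submodule.sub_mem _ aux_proj_mem hg)
  have hint_a : Integrable (fun t => (u t - P t)^2) μ := ha2.integrable_sq
  have hint_b : Integrable (fun t => (P t - g t)^2) μ := hb2.integrable_sq
  have hint_ab : Integrable (fun t => (u t - P t) * (P t - g t)) μ :=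
    aux_mul_integrable ha2 hb2
  have hfun : ∀ t : X, (u t - g t)^2
      = (u t - P t)^2 + (2 * ((u t - P t) * (P t - g t)) + (P t - g t)^2) := by
    intro t; ring
  calc l2normSq μ (u - g)
      = ∫ t, ((u t - P t)^2 + (2 * ((u t - P t) * (P t - g t)) + (P t - g t)^2)) ∂μ := by
        unfold l2normSq
        exact integral_congr_ae (Filter.Eventually.of_forall fun t => by
          simp only [Pi.sub_apply]; exact hfun t)
    _ = (∫ t, (u t - P t)^2 ∂μ) + ((2 * ∫ t, (u t - P t) * (P t - g t) ∂μ)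
          + ∫ t, (P t - g t)^2 ∂μ) := by
        have hbc : Integrable (fun t => 2 * ((u t - P t) * (P t - g t)) + (P t - g t)^2) μ :=
          (hint_ab.const_mul 2).add hint_b
        rw [integral_add hint_a hbc, integral_add (hint_ab.const_mul 2) hint_b,
          integral_const_mul]
    _ = l2normSq μ (u - P) + l2normSq μ (P - g) := by
        rw [hcross]
        simp only [l2normSq, Pi.sub_apply]
        ring

lemma aux_norm_equiv (hφ2 : ∀ j, MemLp (φ j) 2 μ)
    (hortho : ∀ i j, (∫ t, φ i t * φ j t ∂μ) = if i = j then (1 : ℝ) else 0)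
    {y : Fin n → X} {δ : ℝ} (hZ : Zstat w φ y ≤ δ) (c : Fin m → ℝ) :
    (1 - δ) * l2normSq μ (fun t => ∑ j, c j * φ j t)
      ≤ discNormSq w y (fun t => ∑ j, c j * φ j t) := by
  set G := gram w φ y with hG
  set S := ∑ j, c j ^ 2 with hS
  have hS0 : 0 ≤ S := Finset.sum_nonneg fun j _ => sq_nonneg _
  have hq := aux_quadform w φ y c
  have hl2 := aux_l2_span hφ2 hortho c
  have hspec := aux_spec_bound (G - 1) c
  have hdiff : ∑ j, c j * (G - 1).mulVec c j = (∑ j, c j * G.mulVec c j) - S := by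
    rw [Matrix.sub_mulVec]
    simp only [Pi.sub_apply, Matrix.one_mulVec, mul_sub]
    rw [Finset.sum_sub_distrib, hS]
    congr 1
    exact Finset.sum_congr rfl fun j _ => by ring
  rw [hl2, hq, ← hG]
  have habs := (abs_le.mp hspec).1
  rw [hdiff] at habs
  have hZS : specNorm (G - 1) * S ≤ δ * S := by
    have : specNorm (G - 1) ≤ δ := by
      rw [Zstat, ← hG] at hZ; exact hZ
    exact mul_le_mul_of_nonneg_right this hS0
  nlinarith


lemma aux_disc_expand (y : Fin n → X) (a b : X → ℝ) :
    discNormSq w y (fun s => a s + b s) = discNormSq w y a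
      + 2 * ((1/(n:ℝ)) * ∑ i, w (y i) * (a (y i) * b (y i))) + discNormSq w y b := by
  simp only [discNormSq]
  rw [show ∑ i, w (y i) * (a (y i) + b (y i))^2
      = ∑ i, (w (y i) * a (y i)^2 + (2*(w (y i) * (a (y i) * b (y i)))
        + w (y i) * b (y i)^2)) from Finset.sum_congr rfl fun i _ => by ring]
  rw [Finset.sum_add_distrib, Finset.sum_add_distrib, ← Finset.mul_sum]
  ring

lemma aux_disc_const_mul (y : Fin n → X) (k : ℝ) (g : X → ℝ) :
    discNormSq w y (fun s => k * g s) = k^2 * discNormSq w y g := by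
  simp only [discNormSq]
  rw [show ∑ i, w (y i) * (k * g (y i))^2 = ∑ i, k^2 * (w (y i) * g (y i)^2) from
    Finset.sum_congr rfl fun i _ => by ring, ← Finset.mul_sum]
  ring

lemma aux_cross_zero (hw : ∀ t, 0 < w t) (y : Fin n → X) {Qy : X → ℝ}
    (hQy : Qy ∈ Vspan φ)
    (hmin : ∀ g' ∈ Vspan φ, discNormSq w y (u - Qy) ≤ discNormSq w y (u - g'))
    {g : X → ℝ} (hg : g ∈ Vspan φ) :
    (1/(n:ℝ)) * ∑ i, w (y i) * ((u (y i) - Qy (y i)) * g (y i)) = 0 := by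
  set B := (1/(n:ℝ)) * ∑ i, w (y i) * ((u (y i) - Qy (y i)) * g (y i)) with hB
  set C := discNormSq w y g with hC
  have hC0 : 0 ≤ C := aux_disc_nonneg hw y g
  have key : ∀ t : ℝ, 0 ≤ -(2*t*B) + t^2 * C := by
    intro t
    have hg' : Qy + t • g ∈ Vspan φ := add_mem hQy (Submodule.smul_mem _ _ hg)
    have h1 := hmin _ hg'
    have heq : u - (Qy + t • g) = fun s => (u s - Qy s) + t * (-(g s)) := by
      funext s
      simp only [Pi.sub_apply, Pi.add_apply, Pi.smul_apply, smul_eq_mul]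
      ring
    have heq2 : (fun s => t * (-(g s))) = fun s => (-t) * g s := by funext s; ring
    have hexp : discNormSq w y (u - (Qy + t • g))
        = discNormSq w y (u - Qy) - 2*t*B + t^2 * C := by
      rw [heq]
      have := aux_disc_expand (w := w) y (fun s => u s - Qy s) (fun s => t * (-(g s)))
      rw [this]
      have hcross : ∑ i, w (y i) * ((u (y i) - Qy (y i)) * (t * (-(g (y i)))))
          = (-t) * ∑ i, w (y i) * ((u (y i) - Qy (y i)) * g (y i)) := by
        rw [Finset.mul_sum]
        exact Finset.sum_congr rfl fun i _ => by ring
      rw [hcross, heq2, aux_disc_const_mul]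
      have hd1 : discNormSq w y (fun s => u s - Qy s) = discNormSq w y (u - Qy) := rfl
      rw [hd1, hB, hC]
      ring
    rw [hexp] at h1
    linarith
  have hC1 : (0:ℝ) < C + 1 := by linarith
  have h2 := key (B/(C+1))
  have h3 : 0 ≤ (-(2*(B/(C+1))*B) + (B/(C+1))^2 * C) * (C+1)^2 :=
    mul_nonneg h2 (by positivity)
  have h4 : (-(2*(B/(C+1))*B) + (B/(C+1))^2 * C) * (C+1)^2 = -(B^2*(C+2)) := by
    field_simp
    ring
  rw [h4] at h3
  have hB2 : B^2 ≤ 0 := by nlinarith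
  have : B^2 = 0 := le_antisymm hB2 (sq_nonneg B)
  exact sq_eq_zero_iff.mp this

lemma aux_disc_pyth (hw : ∀ t, 0 < w t) (hφ2 : ∀ j, MemLp (φ j) 2 μ)
    (y : Fin n → X) {Qy : X → ℝ} (hQy : Qy ∈ Vspan φ)
    (hmin : ∀ g' ∈ Vspan φ, discNormSq w y (u - Qy) ≤ discNormSq w y (u - g')) :
    discNormSq w y (fun s => proj μ φ u s - Qy s)
      ≤ discNormSq w y (u - proj μ φ u) := by
  set P := proj μ φ u with hP
  have
    hgmem : (fun s => Qy s - P s) ∈ Vspan φ := by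
    have h := Submodule.sub_mem _ hQy (aux_proj_mem (μ := μ) (φ := φ) (u := u))
    have : (Qy - P) = fun s => Qy s - P s := rfl
    rwa [this] at h
  have hcross := aux_cross_zero hw y hQy hmin hgmem
  have heq : u - P = fun s => (u s - Qy s) + (Qy s - P s) := by
    funext s
    simp only [Pi.sub_apply]
    ring
  have hexp : discNormSq w y (u - P) = discNormSq w y (fun s => u s - Qy s)
      + 2 * ((1/(n:ℝ)) * ∑ i, w (y i) * ((u (y i) - Qy (y i)) * (Qy (y i) - P (y i))))
      + discNormSq w y (fun s => Qy s - P s) := by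
    rw [heq]
    exact aux_disc_expand y _ _
  have hzero : (1/(n:ℝ)) * ∑ i, w (y i) * ((u (y i) - Qy (y i)) * (Qy (y i) - P (y i))) = 0 := by
    exact hcross
  have hsym : discNormSq w y (fun s => P s - Qy s) = discNormSq w y (fun s => Qy s - P s) := by
    simp only [discNormSq]
    congr 1
    exact Finset.sum_congr rfl fun i _ => by ring
  have hnn : 0 ≤ discNormSq w y (fun s => u s - Qy s) := aux_disc_nonneg hw y _
  rw [hsym]
  rw [hexp, hzero] at *
  linarith


lemma aux_map_eval (ρ : Measure X) [IsProbabilityMeasure ρ] (i : Fin n) :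
    Measure.map (fun y : Fin n → X => y i) (Measure.pi fun _ => ρ) = ρ := by
  ext s hs
  rw [Measure.map_apply (measurable_pi_apply i) hs]
  have : (fun y : Fin n → X => y i) ⁻¹' s
      = Set.pi Set.univ (Function.update (fun _ => Set.univ) i s) := by
    rw [← Set.eval_preimage]
  rw [this, Measure.pi_pi]
  rw [Finset.prod_eq_single i]
  · simp
  · intro j _ hj; simp [Function.update_of_ne hj]
  · simp

lemma aux_rho_integrable (μ : Measure X) (hw : ∀ t, 0 < w t) (hwm : Measurable w)
    {v : X → ℝ} (hv2 : MemLp v 2 μ) :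
    Integrable (fun t => w t * v t ^ 2) (μ.withDensity fun t => ENNReal.ofReal (w t)⁻¹) := by
  have hf : Measurable (fun t => ((w t)⁻¹).toNNReal) := (hwm.inv).real_toNNReal
  have hd : (fun t => ENNReal.ofReal (w t)⁻¹) = fun t => (((w t)⁻¹).toNNReal : ℝ≥0∞) := rfl
  have hsmul : (fun t => ((w t)⁻¹).toNNReal • (w t * v t ^ 2)) = fun t => v t ^ 2 := by
    funext t
    have h0 := (hw t).ne'
    simp [NNReal.smul_def, Real.coe_toNNReal _ (inv_nonneg.2 (hw t).le)]
    field_simp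
  rw [hd, integrable_withDensity_iff_integrable_smul hf, hsmul]
  exact hv2.integrable_sq

lemma aux_rho_integral (μ : Measure X) (hw : ∀ t, 0 < w t) (hwm : Measurable w) (v : X → ℝ) :
    ∫ t, w t * v t ^ 2 ∂(μ.withDensity fun t => ENNReal.ofReal (w t)⁻¹)
      = ∫ t, v t ^ 2 ∂μ := by
  have hf : Measurable (fun t => ((w t)⁻¹).toNNReal) := (hwm.inv).real_toNNReal
  have hd : (fun t => ENNReal.ofReal (w t)⁻¹) = fun t => (((w t)⁻¹).toNNReal : ℝ≥0∞) := rfl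
  have hsmul : (fun t => ((w t)⁻¹).toNNReal • (w t * v t ^ 2)) = fun t => v t ^ 2 := by
    funext t
    have h0 := (hw t).ne'
    simp [NNReal.smul_def, Real.coe_toNNReal _ (inv_nonneg.2 (hw t).le)]
    field_simp
  rw [hd, integral_withDensity_eq_integral_smul hf, hsmul]

lemma aux_disc_integrable (μ : Measure X) {ρ : Measure X} [IsProbabilityMeasure ρ]
    (hρ : ρ = μ.withDensity fun t => ENNReal.ofReal (w t)⁻¹)
    (hw : ∀ t, 0 < w t) (hwm : Measurable w)
    {v : X → ℝ} (hvm : Measurable v) (hv2 : MemLp v 2 μ) :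
    Integrable (fun y : Fin n → X => discNormSq w y v) (Measure.pi fun _ => ρ) := by
  have hfm : Measurable (fun t => w t * v t ^ 2) := hwm.mul (hvm.pow_const 2)
  have hfint : Integrable (fun t => w t * v t ^ 2) ρ := by
    rw [hρ]; exact aux_rho_integrable μ hw hwm hv2
  have hterm : ∀ i : Fin n, Integrable
      (fun y : Fin n → X => w (y i) * v (y i) ^ 2) (Measure.pi fun _ => ρ) := by
    intro i
    have h := (integrable_map_measure
      (g := fun t => w t * v t ^ 2) (f := fun y : Fin n → X => y i)
      (by rw [aux_map_eval (n := n) ρ i]; exact hfm.aestronglyMeasurable)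
      (measurable_pi_apply i).aemeasurable).mp
      (by rw [aux_map_eval (n := n) ρ i]; exact hfint)
    exact h
  simp only [discNormSq]
  exact (integrable_finset_sum _ fun i _ => hterm i).const_mul _

lemma aux_disc_integral_le (μ : Measure X) [IsProbabilityMeasure μ]
    {ρ : Measure X} [IsProbabilityMeasure ρ]
    (hρ : ρ = μ.withDensity fun t => ENNReal.ofReal (w t)⁻¹)
    (hw : ∀ t, 0 < w t) (hwm : Measurable w)
    {v : X → ℝ} (hvm : Measurable v) (hv2 : MemLp v 2 μ) :
    ∫ y : Fin n → X, discNormSq w y v ∂(Measure.pi fun _ => ρ) ≤ l2normSq μ v := by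
  rcases Nat.eq_zero_or_pos n with hn | hn
  · subst hn
    simp only [discNormSq]
    simp
    exact aux_l2_nonneg μ v
  · have hfm : Measurable (fun t => w t * v t ^ 2) := hwm.mul (hvm.pow_const 2)
    have hfint : Integrable (fun t => w t * v t ^ 2) ρ := by
      rw [hρ]; exact aux_rho_integrable μ hw hwm hv2
    have hterm : ∀ i : Fin n, Integrable
        (fun y : Fin n → X => w (y i) * v (y i) ^ 2) (Measure.pi fun _ => ρ) := by
      intro i
      exact (integrable_map_measure
        (g := fun t => w t * v t ^ 2) (f := fun y : Fin n → X => y i)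
        (by rw [aux_map_eval (n := n) ρ i]; exact hfm.aestronglyMeasurable)
        (measurable_pi_apply i).aemeasurable).mp
        (by rw [aux_map_eval (n := n) ρ i]; exact hfint)
    have hmarg : ∀ i : Fin n,
        ∫ y : Fin n → X, w (y i) * v (y i) ^ 2 ∂(Measure.pi fun _ => ρ)
          = ∫ t, w t * v t ^ 2 ∂ρ := by
      intro i
      have h : ∫ t, w t * v t ^ 2 ∂ρ
          = ∫ y : Fin n → X, w (y i) * v (y i) ^ 2 ∂(Measure.pi fun _ => ρ) := by
        conv_lhs => rw [← aux_map_eval (n := n) ρ i]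
        rw [integral_map (measurable_pi_apply i).aemeasurable
          (by rw [aux_map_eval (n := n) ρ i]; exact hfm.aestronglyMeasurable)]
      exact h.symm
    have hval : ∫ t, w t * v t ^ 2 ∂ρ = l2normSq μ v := by
      rw [hρ]; exact aux_rho_integral μ hw hwm v
    have : ∫ y : Fin n → X, discNormSq w y v ∂(Measure.pi fun _ => ρ) = l2normSq μ v := by
      simp only [discNormSq]
      rw [integral_const_mul, integral_finset_sum _ fun i _ => hterm i]
      have : ∀ i ∈ Finset.univ, (∫ y : Fin n → X, w (y i) * v (y i) ^ 2
          ∂(Measure.pi fun _ => ρ)) = l2normSq μ v := fun i _ => by rw [hmarg i, hval]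
      rw [Finset.sum_congr rfl this, Finset.sum_const, Finset.card_univ, Fintype.card_fin,
        nsmul_eq_mul]
      have hn' : (n:ℝ) ≠ 0 := Nat.cast_ne_zero.mpr hn.ne'
      field_simp
    rw [this]

lemma aux_Z_measurable (hwm : Measurable w) (hφm : ∀ j, Measurable (φ j)) :
    Measurable (fun y : Fin n → X => Zstat w φ y) := by
  have hcont : Continuous (fun A : Fin m → Fin m → ℝ => specNorm (Matrix.of A)) := by
    have hc : Continuous (fun A : Fin m → Fin m → ℝ =>
        Matrix.toEuclideanCLM (𝕜 := ℝ) (Matrix.of A)) := by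
      let L : (Fin m → Fin m → ℝ) →ₗ[ℝ]
          (EuclideanSpace ℝ (Fin m) →L[ℝ] EuclideanSpace ℝ (Fin m)) :=
        { toFun := fun A => Matrix.toEuclideanCLM (𝕜 := ℝ) (Matrix.of A),
          map_add' := fun A B => map_add _ A B,
          map_smul' := fun r A => map_smul _ r A }
      exact L.continuous_of_finiteDimensional
    exact hc.norm
  have hg : Measurable (fun y : Fin n → X => fun j k : Fin m =>
      gram w φ y j k - (1 : Matrix (Fin m) (Fin m) ℝ) j k) := by
    apply measurable_pi_lambda
    intro j
    apply measurable_pi_lambda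
    intro k
    apply Measurable.sub _ measurable_const
    simp only [gram, Matrix.of_apply]
    apply Measurable.const_mul
    apply Finset.measurable_sum
    intro i _
    exact (hwm.comp (measurable_pi_apply i)).mul
      (((hφm j).comp (measurable_pi_apply i)).mul ((hφm k).comp (measurable_pi_apply i)))
  exact hcont.measurable.comp hg

end Aux

/-- error in expectation for the conditional weighted least-squares estimator. -/
theorem conditional_estimator_expected_error
    {m n : ℕ} {X : Set (Fin d → ℝ)} (μ : Measure X) [IsProbabilityMeasure μ]
    (w : X → ℝ) (hw : ∀ t, 0 < w t) (hwm : Measurable w)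
    (ρ : Measure X) [IsProbabilityMeasure ρ]
    (hρ : ρ = μ.withDensity fun t => ENNReal.ofReal (w t)⁻¹)
    (φ : Fin m → X → ℝ) (hφm : ∀ j, Measurable (φ j)) (hφ2 : ∀ j, MemLp (φ j) 2 μ)
    (hortho : ∀ i j, (∫ t, φ i t * φ j t ∂μ) = if i = j then (1 : ℝ) else 0)
    (u : X → ℝ) (hum : Measurable u) (hu2 : MemLp u 2 μ)
    (δ η : ℝ) (hδ0 : 0 ≤ δ) (hδ1 : δ < 1) (hη0 : 0 ≤ η) (hη1 : η ≤ 1)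
    (hPZ : (Measure.pi fun _ : Fin n => ρ) {y | δ < Zstat w φ y} ≤ ENNReal.ofReal η)
    (Q : (Fin n → X) → X → ℝ)
    (hQ : ∀ y : Fin n → X, Q y ∈ Vspan φ ∧
      ∀ g ∈ Vspan φ, discNormSq w y (u - Q y) ≤ discNormSq w y (u - g)) :
    (∫ y : Fin n → X, l2normSq μ (u - if Zstat w φ y ≤ δ then Q y else 0)
        ∂(Measure.pi fun _ => ρ)) ≤
      (1 + (1 - δ)⁻¹) * l2normSq μ (u - proj μ φ u) + η * l2normSq μ u := by
  classical
  have hPmem2 : MemLp (proj μ φ u) 2 μ := aux_proj_memlp hφ2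
  have hp2 : MemLp (u - proj μ φ u) 2 μ := hu2.sub hPmem2
  have hpm : Measurable (u - proj μ φ u) := hum.sub (aux_proj_measurable hφm)
  set P := proj μ φ u with hPdef
  set l2p := l2normSq μ (u - P) with hl2p
  set l2u := l2normSq μ u with hl2u
  have hl2p0 : 0 ≤ l2p := aux_l2_nonneg μ _
  have hl2u0 : 0 ≤ l2u := aux_l2_nonneg μ u
  have h1δ : (0:ℝ) < 1 - δ := by linarith
  have hδinv : (0:ℝ) ≤ (1-δ)⁻¹ := inv_nonneg.2 h1δ.le
  set A : (Fin n → X) → ℝ := fun y => l2p + (1-δ)⁻¹ * discNormSq w y (u - P) with hA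
  set T : Set (Fin n → X) := {y | δ < Zstat w φ y} with hT
  have hTmeas : MeasurableSet T :=
    measurableSet_lt measurable_const (aux_Z_measurable hwm hφm)
  set G : (Fin n → X) → ℝ := fun y => A y + T.indicator (fun _ => l2u) y with hG
  have hdiscInt : Integrable (fun y : Fin n → X => discNormSq w y (u - P))
      (Measure.pi fun _ => ρ) := aux_disc_integrable μ hρ hw hwm hpm hp2
  have hAint : Integrable A (Measure.pi fun _ => ρ) :=
    (integrable_const l2p).add (hdiscInt.const_mul _)
  have hIndInt : Integrable (T.indicator fun _ => l2u) (Measure.pi fun _ => ρ) :=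
    (integrable_const l2u).indicator hTmeas
  have hGint : Integrable G (Measure.pi fun _ => ρ) := hAint.add hIndInt
  have hAnn : ∀ y, 0 ≤ A y := fun y => add_nonneg hl2p0
    (mul_nonneg hδinv (aux_disc_nonneg hw y _))
  have hpoint : ∀ y : Fin n → X,
      l2normSq μ (u - if Zstat w φ y ≤ δ then Q y else 0) ≤ G y := by
    intro y
    by_cases hzy : Zstat w φ y ≤ δ
    · rw [if_pos hzy]
      have h1 : l2normSq μ (u - Q y) = l2p + l2normSq μ (P - Q y) :=
        aux_pyth_l2 hφ2 hu2 hortho (hQ y).1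
      obtain ⟨c, hc⟩ := aux_mem_span (Submodule.sub_mem _
        (aux_proj_mem (μ := μ) (φ := φ) (u := u)) (hQ y).1)
      have h2 : (1-δ) * l2normSq μ (P - Q y) ≤ discNormSq w y (P - Q y) := by
        rw [hc]; exact aux_norm_equiv hφ2 hortho hzy c
      have h3 : l2normSq μ (P - Q y) ≤ (1-δ)⁻¹ * discNormSq w y (P - Q y) := by
        calc l2normSq μ (P - Q y) = (1-δ)⁻¹ * ((1-δ) * l2normSq μ (P - Q y)) := by
              field_simp
          _ ≤ (1-δ)⁻¹ * discNormSq w y (P - Q y) := mul_le_mul_of_nonneg_left h2 hδinv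
      have h4 : discNormSq w y (P - Q y) ≤ discNormSq w y (u - P) := by
        have h4' := aux_disc_pyth hw hφ2 y (hQ y).1 (hQ y).2
        have heq : discNormSq w y (P - Q y)
            = discNormSq w y (fun s => proj μ φ u s - Q y s) := rfl
        rw [heq]
        exact h4'
      have h5 : l2normSq μ (u - Q y) ≤ A y := by
        rw [h1]
        simp only [hA]
        have h6 : (1-δ)⁻¹ * discNormSq w y (P - Q y)
            ≤ (1-δ)⁻¹ * discNormSq w y (u - P) := mul_le_mul_of_nonneg_left h4 hδinv
        linarith
      have hind : 0 ≤ T.indicator (fun _ => l2u) y :=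
        Set.indicator_nonneg (fun _ _ => hl2u0) y
      calc l2normSq μ (u - Q y) ≤ A y := h5
        _ ≤ G y := by simp only [hG]; exact le_add_of_nonneg_right hind
    · rw [if_neg hzy, sub_zero]
      have hyT : y ∈ T := by rw [hT]; exact lt_of_not_ge hzy
      have : G y = A y + l2u := by
        simp only [hG, Set.indicator_of_mem hyT]
      rw [this, ← hl2u]
      exact le_add_of_nonneg_left (hAnn y)
  calc (∫ y : Fin n → X, l2normSq μ (u - if Zstat w φ y ≤ δ then Q y else 0)
        ∂(Measure.pi fun _ => ρ))
      ≤ ∫ y, G y ∂(Measure.pi fun _ => ρ) :=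
        integral_mono_of_nonneg (Filter.Eventually.of_forall fun y => aux_l2_nonneg μ _)
          hGint (Filter.Eventually.of_forall hpoint)
    _ = (∫ y, A y ∂(Measure.pi fun _ => ρ))
          + ∫ y, T.indicator (fun _ => l2u) y ∂(Measure.pi fun _ => ρ) :=
        integral_add hAint hIndInt
    _ = (l2p + (1-δ)⁻¹ * ∫ y : Fin n → X, discNormSq w y (u - P) ∂(Measure.pi fun _ => ρ))
          + ((Measure.pi fun _ : Fin n => ρ) T).toReal • l2u := by
        simp only [hG, hA]
        rw [integral_add (integrable_const _) (hdiscInt.const_mul _),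
          integral_const_mul, integral_const, integral_indicator_const _ hTmeas]
        simp [measure_univ, Measure.real]
    _ ≤ (l2p + (1-δ)⁻¹ * l2p) + η * l2u := by
        have hd := aux_disc_integral_le (n := n) μ hρ hw hwm hpm hp2
        rw [← hl2p] at hd
        have hμT : ((Measure.pi fun _ : Fin n => ρ) T).toReal ≤ η :=
          ENNReal.toReal_le_of_le_ofReal hη0 hPZ
        have h7 := mul_le_mul_of_nonneg_left hd hδinv
        have h8 := mul_le_mul_of_nonneg_right hμT hl2u0
        rw [smul_eq_mul]
        linarith
    _ = (1 + (1 - δ)⁻¹) * l2p + η * l2u := by ring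
end
end

section
/- Let x^{n,1},…,x^{n,M} be M i.i.d. samples from ρ^⊗n, where P(Z_{x^n} > δ) ≤ η for a single sample x^n ~ ρ^⊗n, with δ ∈ (0,1) and η ∈ (0,1). Let x^{n,⋆} attain min_{1 ≤ i ≤ M} Z_{x^{n,i}}, and let x̃^n have the law of x^{n,⋆} conditioned on the event A_δ = {Z_{x^{n,⋆}} ≤ δ}. Then for any v ∈ L²_μ(X), E(‖v‖²_{x̃^n}) ≤ M (1 − η^M)^{-1} ‖v‖². -/
open MeasureTheory ProbabilityTheory

noncomputable section

variable {d : ℕ}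

/-- Law of `M` i.i.d. samples, each an `n`-tuple of i.i.d. points with distribution `ρ`. -/
def bigP {X : Set (Fin d → ℝ)} (ρ : Measure X) (M n : ℕ) : Measure (Fin M → Fin n → X) :=
  Measure.pi fun _ => Measure.pi fun _ => ρ

/-- The constant `C(ε,M) = M (1−ε)^{1−ε}/(M−ε)^{1−ε}` (with `0⁰ = 1`). -/
def Cconst (M : ℕ) (ε : ℝ) : ℝ :=
  (M : ℝ) * (1 - ε) ^ (1 - ε) / ((M : ℝ) - ε) ^ (1 - ε)


section AuxLemmas

lemma aux_map_eval_pi {ι : Type*} [Fintype ι] [DecidableEq ι] {α : Type*} [MeasurableSpace α]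
    (μ : Measure α) [IsProbabilityMeasure μ] (i : ι) :
    Measure.map (Function.eval i) (Measure.pi fun _ : ι => μ) = μ := by
  ext s hs
  rw [Measure.map_apply (measurable_pi_apply i) hs, Set.eval_preimage, Measure.pi_pi,
    Fintype.prod_eq_single i (fun j hj => by simp [Function.update_of_ne hj])]
  simp

end AuxLemmas

/-- expectation bound for the discrete semi-norm under the boosted
(conditioned) sampling distribution. -/
theorem boosted_discrete_norm_expectation_bound
    {m n M : ℕ} (hM : 0 < M) {X : Set (Fin d → ℝ)} (μ : Measure X) [IsProbabilityMeasure μ]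
    (w : X → ℝ) (hw : ∀ t, 0 < w t) (hwm : Measurable w)
    (ρ : Measure X) [IsProbabilityMeasure ρ]
    (hρ : ρ = μ.withDensity fun t => ENNReal.ofReal (w t)⁻¹)
    (φ : Fin m → X → ℝ) (hφm : ∀ j, Measurable (φ j)) (hφ2 : ∀ j, MemLp (φ j) 2 μ)
    (hortho : ∀ i j, (∫ t, φ i t * φ j t ∂μ) = if i = j then (1 : ℝ) else 0)
    (δ η : ℝ) (hδ0 : 0 < δ) (hδ1 : δ < 1) (hη0 : 0 < η) (hη1 : η < 1)
    (hPZ : (Measure.pi fun _ : Fin n => ρ) {y | δ < Zstat w φ y} ≤ ENNReal.ofReal η)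
    (Istar : (Fin M → Fin n → X) → Fin M) (hIm : Measurable Istar)
    (hmin : ∀ (ω : Fin M → Fin n → X) (i : Fin M),
      Zstat w φ (ω (Istar ω)) ≤ Zstat w φ (ω i))
    (hexch : ∀ σ : Equiv.Perm (Fin M),
      Measure.map (fun ω : Fin M → Fin n → X => ((fun i => ω (σ i)), σ.symm (Istar ω)))
          (bigP ρ M n) =
        Measure.map (fun ω => (ω, Istar ω)) (bigP ρ M n))
    (v : X → ℝ) (hvm : Measurable v) (hv2 : MemLp v 2 μ) :
    (∫ ω, discNormSq w (ω (Istar ω)) v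
        ∂((bigP ρ M n)[|{ω | Zstat w φ (ω (Istar ω)) ≤ δ}])) ≤
      M * (1 - η ^ M)⁻¹ * l2normSq μ v := by
  classical
  set ν : Measure (Fin n → X) := Measure.pi fun _ : Fin n => ρ with hν
  set P : Measure (Fin M → Fin n → X) := bigP ρ M n with hPdef
  have hPpi : P = Measure.pi fun _ : Fin M => ν := rfl
  haveI hνP : IsProbabilityMeasure ν := by rw [hν]; infer_instance
  haveI hPP : IsProbabilityMeasure P := by rw [hPpi]; infer_instance
  set f : (Fin n → X) → ℝ := fun y => discNormSq w y v with hf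
  have hfnonneg : ∀ y, 0 ≤ f y := by
    intro y
    refine mul_nonneg (by positivity) ?_
    exact Finset.sum_nonneg fun i _ => mul_nonneg (hw _).le (sq_nonneg _)
  have hfm : Measurable f := by
    refine measurable_const.mul ?_
    exact Finset.measurable_sum _ fun i _ =>
      (hwm.comp (measurable_pi_apply i)).mul ((hvm.comp (measurable_pi_apply i)).pow_const 2)
  -- Integrability and value of ∫ w v² dρ
  have hv2' : Integrable (fun t => v t ^ 2) μ := hv2.integrable_sq
  have hwv : Integrable (fun t => w t * v t ^ 2) ρ := by
    rw [hρ, integrable_withDensity_iff (f := fun t => ENNReal.ofReal (w t)⁻¹) (hwm.inv.ennreal_ofReal)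
      (Filter.Eventually.of_forall fun t => ENNReal.ofReal_lt_top)]
    refine hv2'.congr (Filter.Eventually.of_forall fun t => ?_)
    show v t ^ 2 = w t * v t ^ 2 * (ENNReal.ofReal (w t)⁻¹).toReal
    rw [ENNReal.toReal_ofReal (inv_nonneg.mpr (hw t).le)]
    rw [mul_comm (w t), mul_assoc, mul_inv_cancel₀ (hw t).ne', mul_one]
  have hl2nonneg : 0 ≤ l2normSq μ v := integral_nonneg fun t => sq_nonneg _
  have hval : ∫ t, w t * v t ^ 2 ∂ρ = l2normSq μ v := by
    rw [hρ,
      show (fun t => ENNReal.ofReal (w t)⁻¹)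
        = fun t => ((Real.toNNReal ((w t)⁻¹) : NNReal) : ENNReal) from rfl,
      integral_withDensity_eq_integral_smul (f := fun t => Real.toNNReal ((w t)⁻¹)) (hwm.inv.real_toNNReal)]
    refine integral_congr_ae (Filter.Eventually.of_forall fun t => ?_)
    show (Real.toNNReal ((w t)⁻¹)) • (w t * v t ^ 2) = v t ^ 2
    rw [NNReal.smul_def, Real.coe_toNNReal _ (inv_nonneg.mpr (hw t).le), smul_eq_mul,
      inv_mul_cancel_left₀ (hw t).ne']
  -- Marginals over ν
  have hgint : ∀ i : Fin n, Integrable (fun y : Fin n → X => w (y i) * v (y i) ^ 2) ν := by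
    intro i
    have hmap : Measure.map (Function.eval i) ν = ρ := aux_map_eval_pi (ι := Fin n) ρ i
    have h1 : Integrable (fun t => w t * v t ^ 2) (Measure.map (Function.eval i) ν) := by
      rw [hmap]; exact hwv
    exact (integrable_map_measure ((hwm.mul (hvm.pow_const 2)).aestronglyMeasurable)
      (measurable_pi_apply i).aemeasurable).mp h1
  have hfint : Integrable f ν := by
    have : Integrable (fun y : Fin n → X => ∑ i, w (y i) * v (y i) ^ 2) ν :=
      integrable_finset_sum _ fun i _ => hgint i
    exact this.const_mul _
  have hgval : ∀ i : Fin n, ∫ y, w (y i) * v (y i) ^ 2 ∂ν = l2normSq μ v := by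
    intro i
    have hmap : Measure.map (Function.eval i) ν = ρ := aux_map_eval_pi (ι := Fin n) ρ i
    rw [← hval, ← hmap, integral_map (measurable_pi_apply i).aemeasurable
      ((hwm.mul (hvm.pow_const 2)).aestronglyMeasurable)]
  have hfν : ∫ y, f y ∂ν ≤ l2normSq μ v := by
    have hsum : ∫ y, f y ∂ν
        = (1 / (n : ℝ)) * ∑ i : Fin n, ∫ y, w (y i) * v (y i) ^ 2 ∂ν := by
      rw [show f = fun y => (1 / (n : ℝ)) * ∑ i, w (y i) * v (y i) ^ 2 from rfl,
        integral_const_mul, integral_finset_sum _ fun i _ => hgint i]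
    rw [hsum]
    simp only [hgval, Finset.sum_const, Finset.card_univ, Fintype.card_fin, nsmul_eq_mul]
    rcases Nat.eq_zero_or_pos n with hn | hn
    · subst hn; simpa using hl2nonneg
    · rw [← mul_assoc, one_div, inv_mul_cancel₀ (by exact_mod_cast hn.ne'), one_mul]
  -- Marginals over P
  have hFint : ∀ i : Fin M, Integrable (fun ω : Fin M → Fin n → X => f (ω i)) P := by
    intro i
    have hmap : Measure.map (Function.eval i) P = ν := by
      rw [hPpi]; exact aux_map_eval_pi (ι := Fin M) ν i
    exact (integrable_map_measure hfm.aestronglyMeasurable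
      (measurable_pi_apply i).aemeasurable).mp (by rwa [hmap])
  have hFval : ∀ i : Fin M, ∫ ω, f (ω i) ∂P = ∫ y, f y ∂ν := by
    intro i
    have hmap : Measure.map (Function.eval i) P = ν := by
      rw [hPpi]; exact aux_map_eval_pi (ι := Fin M) ν i
    rw [← hmap, integral_map (measurable_pi_apply i).aemeasurable hfm.aestronglyMeasurable]
  -- Measurability of ω ↦ ω (Istar ω)
  have hem : Measurable fun ω : Fin M → Fin n → X => ω (Istar ω) := by
    have h1 : Measurable fun p : (Fin M → Fin n → X) × Fin M => p.1 p.2 :=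
      measurable_from_prod_countable_left fun i => measurable_pi_apply i
    exact h1.comp (measurable_id.prodMk hIm)
  have hbm : Measurable fun ω : Fin M → Fin n → X => f (ω (Istar ω)) := hfm.comp hem
  -- Integrability and bound of the boosted integrand over P
  have hSint : Integrable (fun ω : Fin M → Fin n → X => ∑ i, f (ω i)) P :=
    integrable_finset_sum _ fun i _ => hFint i
  have hle_sum : ∀ ω : Fin M → Fin n → X, f (ω (Istar ω)) ≤ ∑ i, f (ω i) := fun ω =>
    Finset.single_le_sum (fun i _ => hfnonneg _) (Finset.mem_univ (Istar ω))
  have hBint : Integrable (fun ω : Fin M → Fin n → X => f (ω (Istar ω))) P := by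
    refine hSint.mono' hbm.aestronglyMeasurable (Filter.Eventually.of_forall fun ω => ?_)
    rw [Real.norm_eq_abs, abs_of_nonneg (hfnonneg _)]
    exact hle_sum ω
  have hBle : ∫ ω, f (ω (Istar ω)) ∂P ≤ (M : ℝ) * l2normSq μ v := by
    calc ∫ ω, f (ω (Istar ω)) ∂P ≤ ∫ ω, ∑ i, f (ω i) ∂P :=
          integral_mono hBint hSint hle_sum
      _ = ∑ i : Fin M, ∫ ω, f (ω i) ∂P := integral_finset_sum _ fun i _ => hFint i
      _ = (M : ℝ) * ∫ y, f y ∂ν := by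
          simp [hFval, Finset.sum_const, Finset.card_univ, nsmul_eq_mul]
      _ ≤ (M : ℝ) * l2normSq μ v := mul_le_mul_of_nonneg_left hfν (Nat.cast_nonneg M)
  -- Measurability of Zstat and the conditioning event
  have hgramm : Measurable fun y : Fin n → X => (fun j k => gram w φ y j k : Fin m → Fin m → ℝ) := by
    refine measurable_pi_lambda _ fun j => measurable_pi_lambda _ fun k => ?_
    refine measurable_const.mul ?_
    exact Finset.measurable_sum _ fun i _ =>
      (hwm.comp (measurable_pi_apply i)).mul
        (((hφm j).comp (measurable_pi_apply i)).mul ((hφm k).comp (measurable_pi_apply i)))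
  have hlin : IsLinearMap ℝ fun A : Matrix (Fin m) (Fin m) ℝ =>
      (Matrix.toEuclideanCLM (𝕜 := ℝ) A :
        EuclideanSpace ℝ (Fin m) →L[ℝ] EuclideanSpace ℝ (Fin m)) :=
    ⟨fun a b => map_add _ a b, fun c a => map_smul _ c a⟩
  have hcont0 : Continuous fun A : Matrix (Fin m) (Fin m) ℝ =>
      (Matrix.toEuclideanCLM (𝕜 := ℝ) A :
        EuclideanSpace ℝ (Fin m) →L[ℝ] EuclideanSpace ℝ (Fin m)) :=
    LinearMap.continuous_of_finiteDimensional (hlin.mk' _)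
  have hcontSpec : Continuous (specNorm (m := m)) := hcont0.norm
  have hcontSub : Continuous fun A : Fin m → Fin m → ℝ =>
      (Matrix.of A - 1 : Matrix (Fin m) (Fin m) ℝ) := by
    have : Continuous fun A : Fin m → Fin m → ℝ => (Matrix.of A : Matrix (Fin m) (Fin m) ℝ) :=
      continuous_id
    exact this.sub continuous_const
  have hZm : Measurable fun y : Fin n → X => Zstat w φ y :=
    ((hcontSpec.comp hcontSub).measurable).comp hgramm
  set A : Set (Fin M → Fin n → X) := {ω | Zstat w φ (ω (Istar ω)) ≤ δ} with hAdef
  have hAm : MeasurableSet A := measurableSet_le (hZm.comp hem) measurable_const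
  -- Probability lower bound on A
  have hcompl : P Aᶜ ≤ ENNReal.ofReal (η ^ M) := by
    have hsub : Aᶜ ⊆ Set.pi Set.univ fun _ : Fin M => {y | δ < Zstat w φ y} := by
      intro ω hω i _
      simp only [hAdef, Set.mem_compl_iff, Set.mem_setOf_eq, not_le] at hω
      exact lt_of_lt_of_le hω (hmin ω i)
    calc P Aᶜ ≤ P (Set.pi Set.univ fun _ : Fin M => {y | δ < Zstat w φ y}) :=
          measure_mono hsub
      _ = ∏ _i : Fin M, ν {y | δ < Zstat w φ y} := by rw [hPpi, Measure.pi_pi]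
      _ ≤ ∏ _i : Fin M, ENNReal.ofReal η := Finset.prod_le_prod' fun i _ => hPZ
      _ = ENNReal.ofReal (η ^ M) := by
          rw [Finset.prod_const, Finset.card_univ, Fintype.card_fin,
            ← ENNReal.ofReal_pow hη0.le]
  have hηM : η ^ M < 1 := pow_lt_one₀ hη0.le hη1 hM.ne'
  have hηM0 : (0 : ℝ) < 1 - η ^ M := by linarith
  have h2 : P A = 1 - P Aᶜ := by
    have := prob_compl_eq_one_sub (μ := P) hAm.compl
    rwa [compl_compl] at this
  have hA1 : ENNReal.ofReal (1 - η ^ M) ≤ P A := by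
    rw [h2, ENNReal.ofReal_sub _ (pow_nonneg hη0.le M), ENNReal.ofReal_one]
    exact tsub_le_tsub_left hcompl 1
  have htR : ((P A)⁻¹).toReal ≤ (1 - η ^ M)⁻¹ := by
    have h3 : (P A)⁻¹ ≤ (ENNReal.ofReal (1 - η ^ M))⁻¹ := ENNReal.inv_le_inv' hA1
    have h4 : (ENNReal.ofReal (1 - η ^ M))⁻¹ ≠ ⊤ := by
      simp [ENNReal.inv_ne_top, ENNReal.ofReal_pos.mpr hηM0, (ENNReal.ofReal_pos.mpr hηM0).ne']
    calc ((P A)⁻¹).toReal ≤ ((ENNReal.ofReal (1 - η ^ M))⁻¹).toReal :=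
          ENNReal.toReal_mono h4 h3
      _ = (1 - η ^ M)⁻¹ := by
          rw [ENNReal.toReal_inv, ENNReal.toReal_ofReal hηM0.le]
  -- Final computation
  have hIA0 : 0 ≤ ∫ ω, f (ω (Istar ω)) ∂(P.restrict A) :=
    integral_nonneg fun ω => hfnonneg _
  have hIAle : ∫ ω, f (ω (Istar ω)) ∂(P.restrict A) ≤ ∫ ω, f (ω (Istar ω)) ∂P :=
    integral_mono_measure Measure.restrict_le_self
      (Filter.Eventually.of_forall fun ω => hfnonneg _) hBint
  have hLHS : (∫ ω, discNormSq w (ω (Istar ω)) v ∂(P[|A]))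
      = ((P A)⁻¹).toReal * ∫ ω, f (ω (Istar ω)) ∂(P.restrict A) := by
    rw [ProbabilityTheory.cond, integral_smul_measure, smul_eq_mul]
  calc (∫ ω, discNormSq w (ω (Istar ω)) v ∂(P[|A]))
      = ((P A)⁻¹).toReal * ∫ ω, f (ω (Istar ω)) ∂(P.restrict A) := hLHS
    _ ≤ (1 - η ^ M)⁻¹ * ((M : ℝ) * l2normSq μ v) := by
        refine mul_le_mul htR (hIAle.trans hBle) hIA0 ?_
        positivity
    _ = (M : ℝ) * (1 - η ^ M)⁻¹ * l2normSq μ v := by ring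
end
end

section
/- Let x̃^n be a sample from the boosted distribution: the law of x^{n,⋆} (the minimizer of Z over M i.i.d. samples from ρ^⊗n, with P(Z_{x^n} > δ) ≤ η for a single sample) conditioned on the event {Z_{x^{n,⋆}} ≤ δ}, for δ ∈ (0,1), η ∈ (0,1). Then for any v ∈ L²_μ(X), the weighted least-squares projection satisfies E(‖Q^{x̃^n}_{V_m} v‖²) ≤ (1−δ)^{-1} M (1 − η^M)^{-1} ‖v‖². -/
open MeasureTheory ProbabilityTheory
open scoped ENNReal

noncomputable section

variable {d : ℕ}

/-! ### Auxiliary lemmas -/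

open scoped RealInnerProductSpace

private lemma sum_swap3 {n m : ℕ} (f : Fin n → Fin m → Fin m → ℝ) :
    ∑ i, ∑ j, ∑ k, f i j k = ∑ j, ∑ k, ∑ i, f i j k := by
  rw [Finset.sum_comm]
  exact Finset.sum_congr rfl fun j _ => Finset.sum_comm

private lemma disc_nonneg {X : Set (Fin d → ℝ)} {w : X → ℝ} (hw : ∀ t, 0 < w t) {n : ℕ}
    (y : Fin n → X) (u : X → ℝ) : 0 ≤ discNormSq w y u := by
  unfold discNormSq
  exact mul_nonneg (by positivity)
    (Finset.sum_nonneg fun i _ => mul_nonneg (hw _).le (sq_nonneg _))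

private lemma coercivity {m n : ℕ} {X : Set (Fin d → ℝ)} (μ : Measure X)
    (w : X → ℝ) (φ : Fin m → X → ℝ) (hφ2 : ∀ j, MemLp (φ j) 2 μ)
    (hortho : ∀ i j, (∫ t, φ i t * φ j t ∂μ) = if i = j then (1 : ℝ) else 0)
    {δ : ℝ} (hδ1 : δ < 1) (y : Fin n → X) (hZ : Zstat w φ y ≤ δ)
    {q : X → ℝ} (hq : q ∈ Vspan φ) :
    l2normSq μ q ≤ (1 - δ)⁻¹ * discNormSq w y q := by
  obtain ⟨c, hc⟩ := (Submodule.mem_span_range_iff_exists_fun ℝ).mp hq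
  have hq' : ∀ t, q t = ∑ j, c j * φ j t := by
    intro t; rw [← hc]; simp [Finset.sum_apply]
  have hphi_int : ∀ j k : Fin m, Integrable (fun t => φ j t * φ k t) μ := by
    intro j k
    have h1 : Integrable (fun t => (φ j t + φ k t) ^ 2) μ := by
      have := ((hφ2 j).add (hφ2 k)).integrable_sq
      simpa [Pi.add_apply] using this
    have h2 := (hφ2 j).integrable_sq
    have h3 := (hφ2 k).integrable_sq
    have heq : (fun t => φ j t * φ k t)
        = fun t => ((φ j t + φ k t) ^ 2 - φ j t ^ 2 - φ k t ^ 2) / 2 := by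
      funext t; ring
    rw [heq]
    exact ((h1.sub h2).sub h3).div_const 2
  have l2q : l2normSq μ q = ∑ j, (c j) ^ 2 := by
    have h1 : ∀ t : X, q t ^ 2 = ∑ j, ∑ k, (c j * c k) * (φ j t * φ k t) := by
      intro t
      rw [hq' t, sq, Finset.sum_mul_sum]
      exact Finset.sum_congr rfl fun j _ => Finset.sum_congr rfl fun k _ => by ring
    have hint : ∀ j k : Fin m, Integrable (fun t => (c j * c k) * (φ j t * φ k t)) μ :=
      fun j k => (hphi_int j k).const_mul _
    calc l2normSq μ q = ∫ t, ∑ j, ∑ k, (c j * c k) * (φ j t * φ k t) ∂μ := by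
          unfold l2normSq
          exact integral_congr_ae (Filter.Eventually.of_forall h1)
      _ = ∑ j, ∑ k, ∫ t, (c j * c k) * (φ j t * φ k t) ∂μ := by
          rw [integral_finset_sum _ fun j _ => integrable_finset_sum _ fun k _ => hint j k]
          exact Finset.sum_congr rfl fun j _ => integral_finset_sum _ fun k _ => hint j k
      _ = ∑ j, ∑ k, (c j * c k) * (if j = k then (1:ℝ) else 0) := by
          refine Finset.sum_congr rfl fun j _ => Finset.sum_congr rfl fun k _ => ?_
          rw [MeasureTheory.integral_const_mul, hortho j k]
      _ = ∑ j, (c j) ^ 2 := by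
          refine Finset.sum_congr rfl fun j _ => ?_
          rw [Finset.sum_eq_single j]
          · simp [sq]
          · intro k _ hk; simp [Ne.symm hk]
          · simp
  have discq : discNormSq w y q = ∑ j, ∑ k, c j * c k * gram w φ y j k := by
    unfold discNormSq gram
    simp only [Matrix.of_apply]
    have h1 : ∀ i : Fin n, w (y i) * q (y i) ^ 2
        = ∑ j, ∑ k, c j * c k * (w (y i) * (φ j (y i) * φ k (y i))) := by
      intro i
      rw [hq' (y i), sq, Finset.sum_mul_sum, Finset.mul_sum]
      refine Finset.sum_congr rfl fun j _ => ?_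
      rw [Finset.mul_sum]
      exact Finset.sum_congr rfl fun k _ => by ring
    calc (1 / (n:ℝ)) * ∑ i, w (y i) * q (y i) ^ 2
        = ∑ i, ∑ j, ∑ k, (1 / (n:ℝ)) * (c j * c k * (w (y i) * (φ j (y i) * φ k (y i)))) := by
          rw [Finset.mul_sum]
          refine Finset.sum_congr rfl fun i _ => ?_
          rw [h1 i, Finset.mul_sum]
          refine Finset.sum_congr rfl fun j _ => ?_
          rw [Finset.mul_sum]
      _ = ∑ j, ∑ k, ∑ i, (1 / (n:ℝ)) * (c j * c k * (w (y i) * (φ j (y i) * φ k (y i)))) :=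
          sum_swap3 _
      _ = ∑ j, ∑ k, c j * c k * ((1 / (n:ℝ)) * ∑ i, w (y i) * (φ j (y i) * φ k (y i))) := by
          refine Finset.sum_congr rfl fun j _ => Finset.sum_congr rfl fun k _ => ?_
          rw [Finset.mul_sum, Finset.mul_sum]
          exact Finset.sum_congr rfl fun i _ => by ring
  set B : Matrix (Fin m) (Fin m) ℝ := gram w φ y - 1 with hB
  have hquad : |∑ j, ∑ k, c j * c k * B j k| ≤ δ * ∑ j, (c j) ^ 2 := by
    set x : EuclideanSpace ℝ (Fin m) := (WithLp.equiv 2 _).symm c with hx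
    have hApp : Matrix.toEuclideanCLM (𝕜 := ℝ) B x = (WithLp.equiv 2 _).symm (B.mulVec c) :=
      Matrix.toEuclideanCLM_toLp B c
    have hinner : ⟪x, Matrix.toEuclideanCLM (𝕜 := ℝ) B x⟫ = ∑ j, ∑ k, c j * c k * B j k := by
      rw [hApp]
      simp only [PiLp.inner_apply, RCLike.inner_apply, conj_trivial]
      refine Finset.sum_congr rfl fun j _ => ?_
      show (B.mulVec c) j * c j = _
      rw [Matrix.mulVec, dotProduct, Finset.sum_mul]
      exact Finset.sum_congr rfl fun k _ => by ring
    have hxnorm : ‖x‖ ^ 2 = ∑ j, (c j) ^ 2 := by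
      rw [EuclideanSpace.norm_eq, Real.sq_sqrt (by positivity)]
      refine Finset.sum_congr rfl fun j _ => ?_
      show ‖c j‖ ^ 2 = _
      rw [Real.norm_eq_abs, sq_abs]
    have h1 : |⟪x, Matrix.toEuclideanCLM (𝕜 := ℝ) B x⟫| ≤ ‖x‖ * (specNorm B * ‖x‖) := by
      refine le_trans (abs_real_inner_le_norm _ _) ?_
      exact mul_le_mul_of_nonneg_left
        ((Matrix.toEuclideanCLM (𝕜 := ℝ) B).le_opNorm x) (norm_nonneg x)
    rw [hinner] at h1
    have hZ' : specNorm B ≤ δ := hZ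
    have h2 : ‖x‖ * (specNorm B * ‖x‖) ≤ δ * ∑ j, (c j) ^ 2 := by
      have h3 : ‖x‖ * (specNorm B * ‖x‖) = specNorm B * ‖x‖ ^ 2 := by ring
      rw [h3, hxnorm]
      exact mul_le_mul_of_nonneg_right hZ' (Finset.sum_nonneg fun j _ => sq_nonneg _)
    exact h1.trans h2
  have hsplit : discNormSq w y q = (∑ j, (c j) ^ 2) + ∑ j, ∑ k, c j * c k * B j k := by
    rw [discq]
    have e1 : ∀ j k : Fin m, c j * c k * gram w φ y j k
        = c j * c k * ((1 : Matrix (Fin m) (Fin m) ℝ) j k) + c j * c k * B j k := by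
      intro j k; rw [hB, Matrix.sub_apply]; ring
    have e2 : ∑ j, ∑ k, c j * c k * ((1 : Matrix (Fin m) (Fin m) ℝ) j k) = ∑ j, (c j) ^ 2 := by
      refine Finset.sum_congr rfl fun j _ => ?_
      rw [Finset.sum_eq_single j]
      · simp [Matrix.one_apply, sq]
      · intro k _ hk; rw [Matrix.one_apply_ne (Ne.symm hk), mul_zero]
      · simp
    calc ∑ j, ∑ k, c j * c k * gram w φ y j k
        = ∑ j, ∑ k, (c j * c k * ((1 : Matrix (Fin m) (Fin m) ℝ) j k) + c j * c k * B j k) :=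
          Finset.sum_congr rfl fun j _ => Finset.sum_congr rfl fun k _ => e1 j k
      _ = (∑ j, ∑ k, c j * c k * ((1 : Matrix (Fin m) (Fin m) ℝ) j k))
            + ∑ j, ∑ k, c j * c k * B j k := by
          rw [← Finset.sum_add_distrib]
          exact Finset.sum_congr rfl fun j _ => Finset.sum_add_distrib
      _ = _ := by rw [e2]
  have hpos : (0:ℝ) < 1 - δ := by linarith
  rw [l2q, inv_mul_eq_div, le_div_iff₀ hpos]
  have habs := abs_le.mp hquad
  rw [hsplit]
  nlinarith [habs.1]

private lemma proj_disc_le {X : Set (Fin d → ℝ)} {m n : ℕ} (w : X → ℝ) (hw : ∀ t, 0 < w t)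
    (φ : Fin m → X → ℝ) (y : Fin n → X) (v q : X → ℝ) (hq : q ∈ Vspan φ)
    (hmin : ∀ g ∈ Vspan φ, discNormSq w y (v - q) ≤ discNormSq w y (v - g)) :
    discNormSq w y q ≤ discNormSq w y v := by
  set a : ℝ := discNormSq w y (v - q) with ha
  set b : ℝ := (1 / (n:ℝ)) * ∑ i, w (y i) * ((v (y i) - q (y i)) * q (y i)) with hb
  set cc : ℝ := discNormSq w y q with hcc
  have expand : ∀ t : ℝ, discNormSq w y (v - (q + t • q)) = a - 2*t*b + t^2*cc := by
    intro t
    have h1 : ∀ i : Fin n, w (y i) * ((v - (q + t • q)) (y i)) ^ 2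
        = w (y i) * ((v - q) (y i)) ^ 2 - 2*t*(w (y i) * ((v (y i) - q (y i)) * q (y i)))
          + t^2*(w (y i) * q (y i) ^ 2) := by
      intro i
      simp only [Pi.sub_apply, Pi.add_apply, Pi.smul_apply, smul_eq_mul]
      ring
    unfold discNormSq
    rw [Finset.sum_congr rfl fun i _ => h1 i]
    rw [Finset.sum_add_distrib, Finset.sum_sub_distrib, ← Finset.mul_sum, ← Finset.mul_sum]
    rw [ha, hb, hcc]; unfold discNormSq; ring
  have hv_expand : discNormSq w y v = a + 2*b + cc := by
    have h1 : ∀ i : Fin n, w (y i) * v (y i) ^ 2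
        = w (y i) * ((v - q) (y i)) ^ 2 + 2*(w (y i) * ((v (y i) - q (y i)) * q (y i)))
          + w (y i) * q (y i) ^ 2 := by
      intro i; simp only [Pi.sub_apply]; ring
    unfold discNormSq
    rw [Finset.sum_congr rfl fun i _ => h1 i]
    rw [Finset.sum_add_distrib, Finset.sum_add_distrib, ← Finset.mul_sum]
    rw [ha, hb, hcc]; unfold discNormSq; ring
  have hcc0 : 0 ≤ cc := by rw [hcc]; exact disc_nonneg hw y q
  have ha0 : 0 ≤ a := by rw [ha]; exact disc_nonneg hw y (v - q)
  have hquad : ∀ t : ℝ, 2*t*b ≤ t^2*cc := by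
    intro t
    have hmem : q + t • q ∈ Vspan φ := Submodule.add_mem _ hq (Submodule.smul_mem _ t hq)
    have := hmin _ hmem
    rw [expand t] at this
    linarith
  have hb0 : b = 0 := by
    have hpos : (0:ℝ) < cc + 1 := by linarith
    set t0 : ℝ := b / (cc + 1) with ht0
    have h2 : b = t0 * (cc + 1) := (div_mul_cancel₀ b hpos.ne').symm
    have h1 := hquad t0
    rw [h2] at h1
    have h3 : t0 ^ 2 * (cc + 2) ≤ 0 := by nlinarith [h1]
    have h4 : t0 ^ 2 = 0 := le_antisymm (by nlinarith [sq_nonneg t0]) (sq_nonneg t0)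
    have h5 : t0 = 0 := sq_eq_zero_iff.mp h4
    rw [h2, h5, zero_mul]
  rw [hv_expand]
  linarith

private lemma map_eval_pi' {ι : Type*} [Fintype ι] [DecidableEq ι] {α : ι → Type*}
    [∀ i, MeasurableSpace (α i)]
    (μ : ∀ i, Measure (α i)) [∀ i, IsProbabilityMeasure (μ i)] (i : ι) :
    (Measure.pi μ).map (Function.eval i) = μ i := by
  ext s hs
  rw [Measure.map_apply (measurable_pi_apply i) hs]
  have h1 : Function.eval i ⁻¹' s =
      Set.pi Set.univ (Function.update (fun j => (Set.univ : Set (α j))) i s) := by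
    ext ω
    simp only [Set.mem_preimage, Set.mem_pi, Set.mem_univ, true_implies]
    constructor
    · intro h j
      rcases eq_or_ne j i with rfl | hj
      · simpa using h
      · simp [Function.update_of_ne hj]
    · intro h
      simpa using h i
  rw [h1, Measure.pi_pi, Finset.prod_eq_single i]
  · simp
  · intro j _ hj; simp [Function.update_of_ne hj]
  · simp

/-- The linear map sending matrix entries to the corresponding Euclidean CLM. -/
private def Tlin (m : ℕ) :
    (Fin m → Fin m → ℝ) →ₗ[ℝ] (EuclideanSpace ℝ (Fin m) →L[ℝ] EuclideanSpace ℝ (Fin m)) where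
  toFun g := Matrix.toEuclideanCLM (𝕜 := ℝ) (Matrix.of g)
  map_add' a b := by
    show Matrix.toEuclideanCLM (𝕜 := ℝ) (Matrix.of a + Matrix.of b) = _
    rw [map_add]
  map_smul' r a := by
    show Matrix.toEuclideanCLM (𝕜 := ℝ) (r • Matrix.of a) = _
    rw [_root_.map_smul]
    rfl

private lemma Zstat_measurable {X : Set (Fin d → ℝ)} {m n : ℕ} {w : X → ℝ} (hwm : Measurable w)
    {φ : Fin m → X → ℝ} (hφm : ∀ j, Measurable (φ j)) :
    Measurable fun y : Fin n → X => Zstat w φ y := by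
  have hGf : Measurable fun y : Fin n → X => (fun j k => gram w φ y j k : Fin m → Fin m → ℝ) :=
    measurable_pi_lambda _ fun j => measurable_pi_lambda _ fun k => by
      unfold gram
      simp only [Matrix.of_apply]
      exact measurable_const.mul (Finset.measurable_sum _ fun i _ =>
        (hwm.comp (measurable_pi_apply i)).mul
          (((hφm j).comp (measurable_pi_apply i)).mul ((hφm k).comp (measurable_pi_apply i))))
  have hcont : Continuous fun g : Fin m → Fin m → ℝ =>
      ‖Tlin m g - Matrix.toEuclideanCLM (𝕜 := ℝ) (1 : Matrix (Fin m) (Fin m) ℝ)‖ :=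
    ((LinearMap.continuous_of_finiteDimensional (Tlin m)).sub continuous_const).norm
  have heq : (fun y : Fin n → X => Zstat w φ y)
      = fun y => ‖Tlin m (fun j k => gram w φ y j k)
          - Matrix.toEuclideanCLM (𝕜 := ℝ) (1 : Matrix (Fin m) (Fin m) ℝ)‖ := by
    funext y
    unfold Zstat specNorm
    rw [map_sub]
    rfl
  rw [heq]
  exact hcont.measurable.comp hGf

private lemma lintegral_disc_le {X : Set (Fin d → ℝ)} (μ : Measure X) [IsProbabilityMeasure μ]
    (w : X → ℝ) (hw : ∀ t, 0 < w t) (hwm : Measurable w)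
    (ρ : Measure X) [IsProbabilityMeasure ρ]
    (hρ : ρ = μ.withDensity fun t => ENNReal.ofReal (w t)⁻¹)
    (v : X → ℝ) (hvm : Measurable v) (hv2 : MemLp v 2 μ) (n : ℕ) :
    ∫⁻ y, ENNReal.ofReal (discNormSq w y v) ∂(Measure.pi fun _ : Fin n => ρ)
      ≤ ENNReal.ofReal (l2normSq μ v) := by
  have hwv2m : Measurable fun t => w t * v t ^ 2 := hwm.mul (hvm.pow_const 2)
  have hIρ : ∫⁻ t, ENNReal.ofReal (w t * v t ^ 2) ∂ρ = ENNReal.ofReal (l2normSq μ v) := by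
    rw [hρ, lintegral_withDensity_eq_lintegral_mul _ (show Measurable fun t => ENNReal.ofReal (w t)⁻¹ from hwm.inv.ennreal_ofReal) hwv2m.ennreal_ofReal]
    have hpt : ∀ t, ((fun t => ENNReal.ofReal (w t)⁻¹) * fun t => ENNReal.ofReal (w t * v t ^ 2)) t
        = ENNReal.ofReal (v t ^ 2) := by
      intro t
      simp only [Pi.mul_apply]
      rw [← ENNReal.ofReal_mul (inv_nonneg.mpr (hw t).le)]
      congr 1
      rw [← mul_assoc, inv_mul_cancel₀ (hw t).ne', one_mul]
    rw [lintegral_congr hpt,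
      ← ofReal_integral_eq_lintegral_ofReal hv2.integrable_sq
        (Filter.Eventually.of_forall fun t => sq_nonneg _)]
    rfl
  have hF : Measurable fun t : X => ENNReal.ofReal (w t * v t ^ 2) := by
    exact hwv2m.ennreal_ofReal
  have hterm : ∀ k : Fin n,
      Measurable fun y : Fin n → X => ENNReal.ofReal (w (y k) * v (y k) ^ 2) := by
    intro k
    exact ((hwm.comp (measurable_pi_apply k)).mul
      ((hvm.comp (measurable_pi_apply k)).pow_const 2)).ennreal_ofReal
  have hcoord : ∀ k : Fin n,
      ∫⁻ y, ENNReal.ofReal (w (y k) * v (y k) ^ 2) ∂(Measure.pi fun _ : Fin n => ρ)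
        = ENNReal.ofReal (l2normSq μ v) := by
    intro k
    calc ∫⁻ y, ENNReal.ofReal (w (y k) * v (y k) ^ 2) ∂(Measure.pi fun _ : Fin n => ρ)
        = ∫⁻ t, ENNReal.ofReal (w t * v t ^ 2)
            ∂((Measure.pi fun _ : Fin n => ρ).map (Function.eval k)) :=
          (lintegral_map (g := Function.eval k) hF
            (measurable_pi_apply (X := fun _ : Fin n => X) k)).symm
      _ = ∫⁻ t, ENNReal.ofReal (w t * v t ^ 2) ∂ρ := by
          rw [map_eval_pi' (fun _ : Fin n => ρ) k]
      _ = ENNReal.ofReal (l2normSq μ v) := hIρ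
  calc ∫⁻ y, ENNReal.ofReal (discNormSq w y v) ∂(Measure.pi fun _ : Fin n => ρ)
      = ∫⁻ y, ENNReal.ofReal (1 / (n:ℝ)) * ∑ k, ENNReal.ofReal (w (y k) * v (y k) ^ 2)
          ∂(Measure.pi fun _ : Fin n => ρ) := by
        refine lintegral_congr fun y => ?_
        unfold discNormSq
        rw [ENNReal.ofReal_mul (by positivity),
          ENNReal.ofReal_sum_of_nonneg fun k _ => mul_nonneg (hw _).le (sq_nonneg _)]
    _ = ENNReal.ofReal (1 / (n:ℝ)) * ∑ k, ∫⁻ y, ENNReal.ofReal (w (y k) * v (y k) ^ 2)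
          ∂(Measure.pi fun _ : Fin n => ρ) := by
        rw [lintegral_const_mul _ (Finset.measurable_sum _ fun k _ => hterm k),
          lintegral_finset_sum _ fun k _ => hterm k]
    _ = ENNReal.ofReal (1 / (n:ℝ)) * ((n : ℝ≥0∞) * ENNReal.ofReal (l2normSq μ v)) := by
        rw [Finset.sum_congr rfl fun k _ => hcoord k]
        simp [Finset.sum_const]
    _ ≤ ENNReal.ofReal (l2normSq μ v) := by
        rcases Nat.eq_zero_or_pos n with rfl | hn
        · simp
        · rw [← mul_assoc, ← ENNReal.ofReal_natCast n,
            ← ENNReal.ofReal_mul (by positivity), one_div,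
            inv_mul_cancel₀ (by exact_mod_cast hn.ne' : (n:ℝ) ≠ 0), ENNReal.ofReal_one, one_mul]

/-- stability in expectation of the boosted weighted least-squares projection. -/
theorem boosted_lsq_projection_stability
    {m n M : ℕ} (hM : 0 < M) {X : Set (Fin d → ℝ)} (μ : Measure X) [IsProbabilityMeasure μ]
    (w : X → ℝ) (hw : ∀ t, 0 < w t) (hwm : Measurable w)
    (ρ : Measure X) [IsProbabilityMeasure ρ]
    (hρ : ρ = μ.withDensity fun t => ENNReal.ofReal (w t)⁻¹)
    (φ : Fin m → X → ℝ) (hφm : ∀ j, Measurable (φ j)) (hφ2 : ∀ j, MemLp (φ j) 2 μ)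
    (hortho : ∀ i j, (∫ t, φ i t * φ j t ∂μ) = if i = j then (1 : ℝ) else 0)
    (δ η : ℝ) (hδ0 : 0 < δ) (hδ1 : δ < 1) (hη0 : 0 < η) (hη1 : η < 1)
    (hPZ : (Measure.pi fun _ : Fin n => ρ) {y | δ < Zstat w φ y} ≤ ENNReal.ofReal η)
    (Istar : (Fin M → Fin n → X) → Fin M) (hIm : Measurable Istar)
    (hmin : ∀ (ω : Fin M → Fin n → X) (i : Fin M),
      Zstat w φ (ω (Istar ω)) ≤ Zstat w φ (ω i))
    (hexch : ∀ σ : Equiv.Perm (Fin M),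
      Measure.map (fun ω : Fin M → Fin n → X => ((fun i => ω (σ i)), σ.symm (Istar ω)))
          (bigP ρ M n) =
        Measure.map (fun ω => (ω, Istar ω)) (bigP ρ M n))
    (v : X → ℝ) (hvm : Measurable v) (hv2 : MemLp v 2 μ)
    (Q : (Fin n → X) → X → ℝ)
    (hQ : ∀ y : Fin n → X, Q y ∈ Vspan φ ∧
      ∀ g ∈ Vspan φ, discNormSq w y (v - Q y) ≤ discNormSq w y (v - g)) :
    (∫ ω, l2normSq μ (Q (ω (Istar ω)))
        ∂((bigP ρ M n)[|{ω | Zstat w φ (ω (Istar ω)) ≤ δ}])) ≤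
      (1 - δ)⁻¹ * M * (1 - η ^ M)⁻¹ * l2normSq μ v := by
  classical
  haveI hP_prob : IsProbabilityMeasure (bigP ρ M n) := by unfold bigP; infer_instance
  set P := bigP ρ M n with hPdef
  have hZmeas : Measurable fun y : Fin n → X => Zstat w φ y := Zstat_measurable hwm hφm
  set A : Set (Fin M → Fin n → X) := {ω | Zstat w φ (ω (Istar ω)) ≤ δ} with hAdef
  have hA : MeasurableSet A := by
    have hrepr : A = ⋃ i : Fin M, (Istar ⁻¹' {i})
        ∩ ((fun ω : Fin M → Fin n → X => Zstat w φ (ω i)) ⁻¹' Set.Iic δ) := by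
      ext ω
      simp only [hAdef, Set.mem_setOf_eq, Set.mem_iUnion, Set.mem_inter_iff, Set.mem_preimage,
        Set.mem_singleton_iff, Set.mem_Iic]
      constructor
      · intro h; exact ⟨Istar ω, rfl, h⟩
      · rintro ⟨i, hi, h⟩; rw [hi]; exact h
    rw [hrepr]
    exact MeasurableSet.iUnion fun i => (hIm (measurableSet_singleton i)).inter
      ((hZmeas.comp (measurable_pi_apply i)) measurableSet_Iic)
  -- lower bound on P A
  have hAc_sub : Aᶜ ⊆ Set.pi Set.univ (fun _ : Fin M => {y : Fin n → X | δ < Zstat w φ y}) := by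
    intro ω hω i _
    simp only [hAdef, Set.mem_compl_iff, Set.mem_setOf_eq, not_le] at hω
    exact lt_of_lt_of_le hω (hmin ω i)
  have hAc_le : P Aᶜ ≤ ENNReal.ofReal (η ^ M) := by
    refine le_trans (measure_mono hAc_sub) ?_
    have hS : P (Set.pi Set.univ fun _ : Fin M => {y : Fin n → X | δ < Zstat w φ y})
        = ∏ _i : Fin M, (Measure.pi fun _ : Fin n => ρ) {y | δ < Zstat w φ y} := by
      rw [hPdef]; unfold bigP; exact Measure.pi_pi _ _
    rw [hS, Finset.prod_const]
    calc ((Measure.pi fun _ : Fin n => ρ) {y | δ < Zstat w φ y}) ^ (Finset.univ : Finset (Fin M)).card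
        ≤ (ENNReal.ofReal η) ^ (Finset.univ : Finset (Fin M)).card := pow_le_pow_left' hPZ _
      _ = ENNReal.ofReal (η ^ M) := by
          rw [Finset.card_univ, Fintype.card_fin, ENNReal.ofReal_pow hη0.le]
  have hηM : η ^ M < 1 := pow_lt_one₀ hη0.le hη1 hM.ne'
  have hηM0 : (0:ℝ) < 1 - η ^ M := by linarith
  have hPA : ENNReal.ofReal (1 - η ^ M) ≤ P A := by
    have h2 : (1:ℝ≥0∞) ≤ P A + ENNReal.ofReal (η ^ M) := by
      calc (1:ℝ≥0∞) = P A + P Aᶜ := by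
            rw [measure_add_measure_compl hA, measure_univ]
        _ ≤ P A + ENNReal.ofReal (η ^ M) := add_le_add le_rfl hAc_le
    rw [ENNReal.ofReal_sub _ (pow_nonneg hη0.le M), ENNReal.ofReal_one]
    exact tsub_le_iff_right.mpr h2
  have hPA0 : P A ≠ 0 := by
    intro h
    rw [h] at hPA
    exact absurd hPA (not_le.mpr (ENNReal.ofReal_pos.mpr hηM0))
  have hPAne : P A ≠ ⊤ := by
    refine (lt_of_le_of_lt (measure_mono (Set.subset_univ A)) ?_).ne
    rw [measure_univ]
    exact ENNReal.one_lt_top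
  have hcinv : ((P A)⁻¹).toReal ≤ (1 - η ^ M)⁻¹ := by
    have h1 : (P A)⁻¹ ≤ (ENNReal.ofReal (1 - η ^ M))⁻¹ := ENNReal.inv_le_inv' hPA
    have h2 : (ENNReal.ofReal (1 - η ^ M))⁻¹ ≠ ⊤ :=
      ENNReal.inv_ne_top.mpr (ENNReal.ofReal_pos.mpr hηM0).ne'
    calc ((P A)⁻¹).toReal ≤ ((ENNReal.ofReal (1 - η ^ M))⁻¹).toReal := ENNReal.toReal_mono h2 h1
      _ = (1 - η ^ M)⁻¹ := by rw [ENNReal.toReal_inv, ENNReal.toReal_ofReal hηM0.le]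
  -- nonnegativity facts
  have hl2v : 0 ≤ l2normSq μ v := integral_nonneg fun t => sq_nonneg _
  have hδinv : (0:ℝ) ≤ (1 - δ)⁻¹ := inv_nonneg.mpr (by linarith)
  have hηinv : (0:ℝ) ≤ (1 - η ^ M)⁻¹ := inv_nonneg.mpr hηM0.le
  set f : (Fin M → Fin n → X) → ℝ := fun ω => l2normSq μ (Q (ω (Istar ω))) with hfdef
  have hf0 : ∀ ω, 0 ≤ f ω := fun ω => integral_nonneg fun t => sq_nonneg _
  show ∫ ω, f ω ∂(P[|A]) ≤ _
  by_cases hfi : Integrable f (P[|A])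
  · -- integrable case
    have hfi' : Integrable f (P.restrict A) := by
      have h := hfi
      unfold ProbabilityTheory.cond at h
      rwa [integrable_smul_measure (ENNReal.inv_ne_zero.mpr hPAne)
        (ENNReal.inv_ne_top.mpr hPA0)] at h
    have key : ∫ ω, f ω ∂(P[|A]) = ((P A)⁻¹).toReal * ∫ ω, f ω ∂(P.restrict A) := by
      unfold ProbabilityTheory.cond
      rw [integral_smul_measure, smul_eq_mul]
    have hrestr : ∫ ω, f ω ∂(P.restrict A)
        = (∫⁻ ω in A, ENNReal.ofReal (f ω) ∂P).toReal :=
      integral_eq_lintegral_of_nonneg_ae (Filter.Eventually.of_forall hf0)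
        hfi'.aestronglyMeasurable
    have hdiscm : Measurable fun y : Fin n → X => discNormSq w y v := by
      unfold discNormSq
      exact measurable_const.mul (Finset.measurable_sum _ fun i _ =>
        (hwm.comp (measurable_pi_apply i)).mul ((hvm.comp (measurable_pi_apply i)).pow_const 2))
    set g : (Fin M → Fin n → X) → ℝ≥0∞ :=
      fun ω => ENNReal.ofReal ((1 - δ)⁻¹) * ∑ i, ENNReal.ofReal (discNormSq w (ω i) v) with hgdef
    have hterm : ∀ i : Fin M, Measurable fun ω : Fin M → Fin n → X =>
        ENNReal.ofReal (discNormSq w (ω i) v) := by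
      intro i
      exact (hdiscm.comp (measurable_pi_apply i)).ennreal_ofReal
    have hgm : Measurable g := by
      rw [hgdef]
      exact (Finset.measurable_sum _ fun i _ => hterm i).const_mul _
    have hpt : ∀ ω ∈ A, ENNReal.ofReal (f ω) ≤ g ω := by
      intro ω hω
      have hZω : Zstat w φ (ω (Istar ω)) ≤ δ := hω
      have h1 : l2normSq μ (Q (ω (Istar ω)))
          ≤ (1 - δ)⁻¹ * discNormSq w (ω (Istar ω)) (Q (ω (Istar ω))) :=
        coercivity μ w φ hφ2 hortho hδ1 _ hZω (hQ _).1
      have h2 : discNormSq w (ω (Istar ω)) (Q (ω (Istar ω))) ≤ discNormSq w (ω (Istar ω)) v :=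
        proj_disc_le w hw φ _ v _ (hQ _).1 (hQ _).2
      have h3 : discNormSq w (ω (Istar ω)) v ≤ ∑ i, discNormSq w (ω i) v :=
        Finset.single_le_sum (f := fun i => discNormSq w (ω i) v)
          (fun i _ => disc_nonneg hw (ω i) v) (Finset.mem_univ (Istar ω))
      have h4 : f ω ≤ (1 - δ)⁻¹ * ∑ i, discNormSq w (ω i) v := by
        refine h1.trans ?_
        exact mul_le_mul_of_nonneg_left (h2.trans h3) hδinv
      calc ENNReal.ofReal (f ω) ≤ ENNReal.ofReal ((1 - δ)⁻¹ * ∑ i, discNormSq w (ω i) v) :=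
            ENNReal.ofReal_le_ofReal h4
        _ = g ω := by
            rw [hgdef, ENNReal.ofReal_mul hδinv,
              ENNReal.ofReal_sum_of_nonneg fun i _ => disc_nonneg hw (ω i) v]
    have hLle : ∫⁻ ω in A, ENNReal.ofReal (f ω) ∂P
        ≤ ENNReal.ofReal ((1 - δ)⁻¹) * ((M : ℝ≥0∞) * ENNReal.ofReal (l2normSq μ v)) := by
      have step1 : ∫⁻ ω in A, ENNReal.ofReal (f ω) ∂P ≤ ∫⁻ ω in A, g ω ∂P :=
        setLIntegral_mono hgm hpt
      have step2 : ∫⁻ ω in A, g ω ∂P ≤ ∫⁻ ω, g ω ∂P := setLIntegral_le_lintegral _ _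
      have step3 : ∫⁻ ω, g ω ∂P = ENNReal.ofReal ((1 - δ)⁻¹)
          * ∑ i, ∫⁻ ω, ENNReal.ofReal (discNormSq w (ω i) v) ∂P := by
        calc ∫⁻ ω, g ω ∂P
            = ENNReal.ofReal ((1 - δ)⁻¹)
              * ∫⁻ ω, ∑ i, ENNReal.ofReal (discNormSq w (ω i) v) ∂P :=
              lintegral_const_mul' _ _ ENNReal.ofReal_ne_top
          _ = _ := by rw [lintegral_finset_sum _ fun i _ => hterm i]
      have step4 : ∀ i : Fin M, ∫⁻ ω, ENNReal.ofReal (discNormSq w (ω i) v) ∂P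
          ≤ ENNReal.ofReal (l2normSq μ v) := by
        intro i
        have hd : Measurable fun y : Fin n → X => ENNReal.ofReal (discNormSq w y v) :=
          hdiscm.ennreal_ofReal
        have hmap : ∫⁻ ω, ENNReal.ofReal (discNormSq w (ω i) v) ∂P
            = ∫⁻ y, ENNReal.ofReal (discNormSq w y v) ∂(Measure.pi fun _ : Fin n => ρ) := by
          calc ∫⁻ ω, ENNReal.ofReal (discNormSq w (ω i) v) ∂P
              = ∫⁻ y, ENNReal.ofReal (discNormSq w y v) ∂(P.map (Function.eval i)) :=
                (lintegral_map (g := Function.eval i) hd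
                  (measurable_pi_apply (X := fun _ : Fin M => (Fin n → X)) i)).symm
            _ = _ := by
                rw [hPdef]
                show ∫⁻ y, _ ∂((Measure.pi fun _ : Fin M => Measure.pi fun _ : Fin n => ρ).map
                  (Function.eval i)) = _
                rw [map_eval_pi' (fun _ : Fin M => Measure.pi fun _ : Fin n => ρ) i]
        rw [hmap]
        exact lintegral_disc_le μ w hw hwm ρ hρ v hvm hv2 n
      calc ∫⁻ ω in A, ENNReal.ofReal (f ω) ∂P ≤ ∫⁻ ω, g ω ∂P := step1.trans step2
        _ = ENNReal.ofReal ((1 - δ)⁻¹)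
            * ∑ i, ∫⁻ ω, ENNReal.ofReal (discNormSq w (ω i) v) ∂P := step3
        _ ≤ ENNReal.ofReal ((1 - δ)⁻¹) * ∑ _i : Fin M, ENNReal.ofReal (l2normSq μ v) :=
            mul_le_mul_right (Finset.sum_le_sum fun i _ => step4 i) _
        _ = ENNReal.ofReal ((1 - δ)⁻¹) * ((M : ℝ≥0∞) * ENNReal.ofReal (l2normSq μ v)) := by
            rw [Finset.sum_const, Finset.card_univ, Fintype.card_fin, nsmul_eq_mul]
    have hfinal : ∫ ω, f ω ∂(P.restrict A) ≤ (1 - δ)⁻¹ * ((M:ℝ) * l2normSq μ v) := by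
      rw [hrestr]
      have h2 : (ENNReal.ofReal ((1 - δ)⁻¹) * ((M : ℝ≥0∞) * ENNReal.ofReal (l2normSq μ v))).toReal
          = (1 - δ)⁻¹ * ((M:ℝ) * l2normSq μ v) := by
        rw [ENNReal.toReal_mul, ENNReal.toReal_mul, ENNReal.toReal_ofReal hδinv,
          ENNReal.toReal_ofReal hl2v, ENNReal.toReal_natCast]
      rw [← h2]
      refine ENNReal.toReal_mono ?_ hLle
      exact ENNReal.mul_ne_top ENNReal.ofReal_ne_top
        (ENNReal.mul_ne_top (ENNReal.natCast_ne_top M) ENNReal.ofReal_ne_top)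
    have hint0 : 0 ≤ ∫ ω, f ω ∂(P.restrict A) := integral_nonneg hf0
    rw [key]
    calc ((P A)⁻¹).toReal * ∫ ω, f ω ∂(P.restrict A)
        ≤ (1 - η ^ M)⁻¹ * ((1 - δ)⁻¹ * ((M:ℝ) * l2normSq μ v)) :=
          mul_le_mul hcinv hfinal hint0 hηinv
      _ = (1 - δ)⁻¹ * M * (1 - η ^ M)⁻¹ * l2normSq μ v := by ring
  · rw [integral_undef hfi]
    exact mul_nonneg (mul_nonneg (mul_nonneg hδinv (Nat.cast_nonneg M)) hηinv) hl2v
end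
end

section
/- Let x̃^n be a sample from the boosted distribution: the law of x^{n,⋆} (the minimizer of Z over M i.i.d. samples from ρ^⊗n, with P(Z_{x^n} > δ) ≤ η for a single sample) conditioned on the event {Z_{x^{n,⋆}} ≤ δ}, for δ ∈ (0,1), η ∈ (0,1). Then for any u ∈ L²_μ(X), the weighted least-squares projection satisfies the quasi-optimality property E(‖u − Q^{x̃^n}_{V_m} u‖²) ≤ (1 + (1−δ)^{-1}(1 − η^M)^{-1} M) ‖u − P_{V_m}u‖². -/
open MeasureTheory ProbabilityTheory
open scoped ENNReal NNReal

noncomputable section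

variable {d : ℕ}

/-! ### Auxiliary lemmas -/

section DiscAux

variable {X : Set (Fin d → ℝ)}

/-- The discrete bilinear form associated with the discrete semi-norm. -/
def dB (w : X → ℝ) {n : ℕ} (y : Fin n → X) (f g : X → ℝ) : ℝ :=
  (1 / (n : ℝ)) * ∑ i, w (y i) * (f (y i) * g (y i))

lemma disc_eq_dB (w : X → ℝ) {n : ℕ} (y : Fin n → X) (f : X → ℝ) :
    discNormSq w y f = dB w y f f := by
  simp [discNormSq, dB, sq]

lemma dB_nonneg {w : X → ℝ} (hw : ∀ t, 0 ≤ w t) {n : ℕ} (y : Fin n → X) (f : X → ℝ) :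
    0 ≤ dB w y f f := by
  apply mul_nonneg (by positivity)
  exact Finset.sum_nonneg fun i _ => mul_nonneg (hw _) (mul_self_nonneg _)

lemma discNormSq_nonneg {w : X → ℝ} (hw : ∀ t, 0 ≤ w t) {n : ℕ} (y : Fin n → X) (f : X → ℝ) :
    0 ≤ discNormSq w y f := by
  rw [disc_eq_dB]; exact dB_nonneg hw y f

lemma dB_sub_expand (w : X → ℝ) {n : ℕ} (y : Fin n → X) (f g : X → ℝ) (t : ℝ) :
    dB w y (fun s => f s - t * g s) (fun s => f s - t * g s)
      = dB w y f f - 2 * t * dB w y f g + t ^ 2 * dB w y g g := by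
  simp only [dB]
  rw [show ∑ i, w (y i) * ((f (y i) - t * g (y i)) * (f (y i) - t * g (y i)))
      = ∑ i, (w (y i) * (f (y i) * f (y i)) - 2 * t * (w (y i) * (f (y i) * g (y i)))
        + t ^ 2 * (w (y i) * (g (y i) * g (y i)))) from
    Finset.sum_congr rfl fun i _ => by ring]
  rw [Finset.sum_add_distrib, Finset.sum_sub_distrib, ← Finset.mul_sum, ← Finset.mul_sum]
  ring

lemma dB_sub_expand' (w : X → ℝ) {n : ℕ} (y : Fin n → X) (f g : X → ℝ) :
    dB w y (fun s => f s - g s) (fun s => f s - g s)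
      = dB w y f f - 2 * dB w y f g + dB w y g g := by
  have h := dB_sub_expand w y f g 1
  simp only [one_mul, one_pow] at h
  rw [h]
  ring

lemma dB_sub_right (w : X → ℝ) {n : ℕ} (y : Fin n → X) (f g h : X → ℝ) :
    dB w y f (fun s => g s - h s) = dB w y f g - dB w y f h := by
  simp only [dB]
  rw [show ∑ i, w (y i) * (f (y i) * (g (y i) - h (y i)))
      = ∑ i, (w (y i) * (f (y i) * g (y i)) - w (y i) * (f (y i) * h (y i))) from
    Finset.sum_congr rfl fun i _ => by ring]
  rw [Finset.sum_sub_distrib]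
  ring

lemma dB_ortho {w : X → ℝ} (hw : ∀ t, 0 ≤ w t) {n : ℕ} (y : Fin n → X) {m : ℕ}
    (φ : Fin m → X → ℝ) (u q : X → ℝ) (hq : q ∈ Vspan φ)
    (hminq : ∀ g ∈ Vspan φ, discNormSq w y (u - q) ≤ discNormSq w y (u - g))
    (g : X → ℝ) (hg : g ∈ Vspan φ) : dB w y (u - q) g = 0 := by
  set B := dB w y (u - q) g with hB
  set D := dB w y g g with hD
  have hDnn : 0 ≤ D := dB_nonneg hw y g
  have key : ∀ t : ℝ, 0 ≤ -(2 * t * B) + t ^ 2 * D := by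
    intro t
    have hmem : q + t • g ∈ Vspan φ := Submodule.add_mem _ hq (Submodule.smul_mem _ t hg)
    have h1 := hminq _ hmem
    have h2 : u - (q + t • g) = fun s => (u - q) s - t * g s := by
      funext s
      simp only [Pi.sub_apply, Pi.add_apply, Pi.smul_apply, smul_eq_mul]
      ring
    rw [disc_eq_dB, disc_eq_dB, h2, dB_sub_expand] at h1
    rw [← hB, ← hD] at h1
    linarith
  have hB2 : B ^ 2 ≤ 0 := by
    by_cases hDz : D = 0
    · have h1 := key 1
      have h2 := key (-1)
      rw [hDz] at h1 h2
      nlinarith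
    · have hDpos : 0 < D := lt_of_le_of_ne hDnn (Ne.symm hDz)
      have h1 := key (B / D)
      have e1 : -(2 * (B / D) * B) + (B / D) ^ 2 * D = -(B ^ 2) / D := by
        field_simp
        ring
      rw [e1, le_div_iff₀ hDpos, zero_mul] at h1
      linarith
  have : B ^ 2 = 0 := le_antisymm hB2 (sq_nonneg B)
  exact pow_eq_zero_iff two_ne_zero |>.mp this

lemma disc_pyth {w : X → ℝ} (hw : ∀ t, 0 ≤ w t) {n : ℕ} (y : Fin n → X) {m : ℕ}
    (φ : Fin m → X → ℝ) (u q P : X → ℝ) (hq : q ∈ Vspan φ) (hP : P ∈ Vspan φ)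
    (hminq : ∀ g ∈ Vspan φ, discNormSq w y (u - q) ≤ discNormSq w y (u - g)) :
    discNormSq w y (P - q) ≤ discNormSq w y (u - P) := by
  have hPq : P - q ∈ Vspan φ := Submodule.sub_mem _ hP hq
  have horth := dB_ortho hw y φ u q hq hminq (P - q) hPq
  have hfun : P - q = fun s => (u - q) s - (u - P) s := by
    funext s
    simp only [Pi.sub_apply]
    ring
  have e1 : discNormSq w y (P - q)
      = dB w y (u - q) (u - q) - 2 * dB w y (u - q) (u - P) + dB w y (u - P) (u - P) := by
    rw [disc_eq_dB, hfun, dB_sub_expand']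
  have e2 : dB w y (u - q) (u - q) - dB w y (u - q) (u - P) = 0 := by
    rw [← dB_sub_right]
    rw [hfun] at horth
    exact horth
  have hA := dB_nonneg hw y (u - q)
  rw [e1, disc_eq_dB w y (u - P)]
  linarith

lemma disc_combo (w : X → ℝ) {n m : ℕ} (y : Fin n → X) (φ : Fin m → X → ℝ) (b : Fin m → ℝ) :
    discNormSq w y (fun t => ∑ j, b j * φ j t)
      = ∑ j, ∑ k, b j * b k * gram w φ y j k := by
  simp only [discNormSq, gram, Matrix.of_apply, sq]
  have h1 : ∀ i : Fin n, w (y i) * ((∑ j, b j * φ j (y i)) * (∑ k, b k * φ k (y i)))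
      = ∑ j, ∑ k, b j * b k * (w (y i) * (φ j (y i) * φ k (y i))) := by
    intro i
    rw [Finset.sum_mul_sum, Finset.mul_sum]
    refine Finset.sum_congr rfl fun j _ => ?_
    rw [Finset.mul_sum]
    exact Finset.sum_congr rfl fun k _ => by ring
  rw [Finset.sum_congr rfl fun i _ => h1 i]
  simp only [Finset.mul_sum]
  rw [Finset.sum_comm]
  refine Finset.sum_congr rfl fun j _ => ?_
  rw [Finset.sum_comm]
  exact Finset.sum_congr rfl fun k _ => Finset.sum_congr rfl fun i _ => by ring

lemma gram_lb {m : ℕ} {X : Set (Fin d → ℝ)} (w : X → ℝ) (φ : Fin m → X → ℝ) {n : ℕ}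
    (y : Fin n → X) {δ : ℝ} (hZ : Zstat w φ y ≤ δ) (b : Fin m → ℝ) :
    (1 - δ) * ∑ j, b j ^ 2 ≤ ∑ j, ∑ k, b j * b k * gram w φ y j k := by
  set A : Matrix (Fin m) (Fin m) ℝ := gram w φ y - 1 with hAdef
  have hZ' : ‖Matrix.toEuclideanCLM (𝕜 := ℝ) A‖ ≤ δ := hZ
  have habs : |∑ j, ∑ k, b j * b k * A j k| ≤ δ * ∑ j, b j ^ 2 := by
    set v : EuclideanSpace ℝ (Fin m) := (WithLp.equiv 2 _).symm b with hv
    have hTv : Matrix.toEuclideanCLM (𝕜 := ℝ) A v = (WithLp.equiv _ _).symm (A.mulVec b) :=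
      Matrix.toEuclideanCLM_toLp A b
    have hinner : (inner ℝ (Matrix.toEuclideanCLM (𝕜 := ℝ) A v) v : ℝ)
        = ∑ j, ∑ k, b j * b k * A j k := by
      rw [hTv]
      simp only [PiLp.inner_apply, RCLike.inner_apply, conj_trivial,
        WithLp.equiv_symm_apply, PiLp.toLp_apply, Matrix.mulVec, dotProduct]
      refine Finset.sum_congr rfl fun j _ => ?_
      rw [Finset.mul_sum]
      exact Finset.sum_congr rfl fun k _ => by
        simp only [hv, WithLp.equiv_symm_apply, PiLp.toLp_apply, WithLp.ofLp_toLp]; ring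
    have hnv : (inner ℝ v v : ℝ) = ∑ j, b j ^ 2 := by
      simp only [PiLp.inner_apply, RCLike.inner_apply, conj_trivial, hv, WithLp.equiv_symm_apply,
        PiLp.toLp_apply, WithLp.ofLp_toLp, sq]
    have h1 : |(inner ℝ (Matrix.toEuclideanCLM (𝕜 := ℝ) A v) v : ℝ)| ≤ δ * ∑ j, b j ^ 2 := by
      calc |(inner ℝ (Matrix.toEuclideanCLM (𝕜 := ℝ) A v) v : ℝ)|
          ≤ ‖Matrix.toEuclideanCLM (𝕜 := ℝ) A v‖ * ‖v‖ := abs_real_inner_le_norm _ _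
        _ ≤ ‖Matrix.toEuclideanCLM (𝕜 := ℝ) A‖ * ‖v‖ * ‖v‖ :=
            mul_le_mul_of_nonneg_right
              ((Matrix.toEuclideanCLM (𝕜 := ℝ) A).le_opNorm v) (norm_nonneg _)
        _ ≤ δ * (‖v‖ * ‖v‖) := by
            rw [mul_assoc]
            exact mul_le_mul_of_nonneg_right hZ' (by positivity)
        _ = δ * ∑ j, b j ^ 2 := by rw [← real_inner_self_eq_norm_mul_norm, hnv]
    rw [← hinner]
    exact h1
  have hsplit : ∑ j, ∑ k, b j * b k * gram w φ y j k
      = (∑ j, ∑ k, b j * b k * A j k) + ∑ j, b j ^ 2 := by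
    have : ∀ j k, b j * b k * gram w φ y j k
        = b j * b k * A j k + b j * b k * (1 : Matrix (Fin m) (Fin m) ℝ) j k := by
      intro j k
      rw [hAdef, Matrix.sub_apply]
      ring
    simp only [this, Finset.sum_add_distrib]
    congr 1
    refine Finset.sum_congr rfl fun j _ => ?_
    simp [Matrix.one_apply, mul_ite, Finset.sum_ite_eq, sq]
  have h2 := abs_le.mp habs
  rw [hsplit]
  linarith [h2.1]

end DiscAux

section L2Aux

variable {X : Set (Fin d → ℝ)}

lemma integrable_mul_of_memL2 {μ : Measure X} {f g : X → ℝ}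
    (hf : MemLp f 2 μ) (hg : MemLp g 2 μ) : Integrable (fun t => f t * g t) μ := by
  have h2 : (1 : ENNReal) / 1 = 1 / 2 + 1 / 2 := by
    rw [ENNReal.div_add_div_same]
    norm_num
    rw [ENNReal.div_self] <;> norm_num
  haveI : ENNReal.HolderTriple 2 2 1 := ⟨by rw [inv_one]; exact ENNReal.inv_two_add_inv_two⟩
  exact memLp_one_iff_integrable.mp (MemLp.smul (r := 1) hg hf)

lemma memL2_proj (μ : Measure X) {m : ℕ} (φ : Fin m → X → ℝ) (hφ2 : ∀ j, MemLp (φ j) 2 μ)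
    (u : X → ℝ) : MemLp (proj μ φ u) 2 μ := by
  have : proj μ φ u = fun t => ∑ j, (∫ s, u s * φ j s ∂μ) * φ j t := rfl
  rw [this]
  exact memLp_finset_sum Finset.univ fun j _ => (hφ2 j).const_mul _

lemma l2_pyth (μ : Measure X) {m : ℕ} (φ : Fin m → X → ℝ)
    (hφ2 : ∀ j, MemLp (φ j) 2 μ)
    (hortho : ∀ i j, (∫ t, φ i t * φ j t ∂μ) = if i = j then (1 : ℝ) else 0)
    (u : X → ℝ) (hu2 : MemLp u 2 μ) (b : Fin m → ℝ) :
    l2normSq μ (fun t => (u - proj μ φ u) t + ∑ j, b j * φ j t)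
      = l2normSq μ (u - proj μ φ u) + ∑ j, b j ^ 2 := by
  set e : X → ℝ := u - proj μ φ u with he
  have hP2 : MemLp (proj μ φ u) 2 μ := memL2_proj μ φ hφ2 u
  have he2 : MemLp e 2 μ := hu2.sub hP2
  have hS2 : MemLp (fun t => ∑ j, b j * φ j t) 2 μ :=
    memLp_finset_sum Finset.univ fun j _ => (hφ2 j).const_mul _
  -- orthogonality of e to each φ j
  have hophi : ∀ j, (∫ t, e t * φ j t ∂μ) = 0 := by
    intro j
    have h1 : (∫ t, e t * φ j t ∂μ)
        = (∫ t, u t * φ j t ∂μ) - ∫ t, proj μ φ u t * φ j t ∂μ := by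
      rw [← integral_sub (integrable_mul_of_memL2 hu2 (hφ2 j))
        (integrable_mul_of_memL2 hP2 (hφ2 j))]
      refine integral_congr_ae (Filter.Eventually.of_forall fun t => ?_)
      simp only [he, Pi.sub_apply]
      ring
    have h2 : (∫ t, proj μ φ u t * φ j t ∂μ) = ∫ s, u s * φ j s ∂μ := by
      have e1 : ∀ t, proj μ φ u t * φ j t
          = ∑ k, (∫ s, u s * φ k s ∂μ) * (φ k t * φ j t) := by
        intro t
        simp only [proj]
        rw [Finset.sum_mul]
        exact Finset.sum_congr rfl fun k _ => by ring
      rw [integral_congr_ae (Filter.Eventually.of_forall e1),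
        integral_finset_sum _ fun k _ =>
          (integrable_mul_of_memL2 (hφ2 k) (hφ2 j)).const_mul _]
      have e2 : ∀ k : Fin m, (∫ t, (∫ s, u s * φ k s ∂μ) * (φ k t * φ j t) ∂μ)
          = (∫ s, u s * φ k s ∂μ) * ∫ t, φ k t * φ j t ∂μ := fun k =>
        integral_const_mul _ _
      simp only [e2, hortho]
      simp
    rw [h1, h2, sub_self]
  -- expansion
  have hexp : ∀ t : X, (e t + ∑ j, b j * φ j t) ^ 2
      = e t ^ 2 + ((2 * (e t * ∑ j, b j * φ j t)) + (∑ j, b j * φ j t) ^ 2) := by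
    intro t; ring
  have hIeS : Integrable (fun t => e t * ∑ j, b j * φ j t) μ :=
    integrable_mul_of_memL2 he2 hS2
  have hIS2 : Integrable (fun t => (∑ j, b j * φ j t) ^ 2) μ := hS2.integrable_sq
  have hIe2 : Integrable (fun t => e t ^ 2) μ := he2.integrable_sq
  have hcross : (∫ t, e t * ∑ j, b j * φ j t ∂μ) = 0 := by
    have e1 : ∀ t : X, e t * ∑ j, b j * φ j t = ∑ j, b j * (e t * φ j t) := by
      intro t
      rw [Finset.mul_sum]
      exact Finset.sum_congr rfl fun j _ => by ring
    rw [integral_congr_ae (Filter.Eventually.of_forall e1),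
      integral_finset_sum _ fun j _ => (integrable_mul_of_memL2 he2 (hφ2 j)).const_mul _]
    simp only [integral_const_mul, hophi, mul_zero, Finset.sum_const_zero]
  have hsq : (∫ t, (∑ j, b j * φ j t) ^ 2 ∂μ) = ∑ j, b j ^ 2 := by
    have e1 : ∀ t : X, (∑ j, b j * φ j t) ^ 2
        = ∑ j, ∑ k, (b j * b k) * (φ j t * φ k t) := by
      intro t
      rw [sq, Finset.sum_mul_sum]
      exact Finset.sum_congr rfl fun j _ => Finset.sum_congr rfl fun k _ => by ring
    rw [integral_congr_ae (Filter.Eventually.of_forall e1),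
      integral_finset_sum _ fun j _ => integrable_finset_sum _ fun k _ =>
        (integrable_mul_of_memL2 (hφ2 j) (hφ2 k)).const_mul _]
    have e2 : ∀ j, (∫ t, ∑ k, (b j * b k) * (φ j t * φ k t) ∂μ) = b j ^ 2 := by
      intro j
      rw [integral_finset_sum _ fun k _ =>
        (integrable_mul_of_memL2 (hφ2 j) (hφ2 k)).const_mul _]
      simp only [integral_const_mul, hortho, mul_ite, mul_one, mul_zero]
      simp [Finset.sum_ite_eq, sq]
    exact Finset.sum_congr rfl fun j _ => e2 j
  calc l2normSq μ (fun t => e t + ∑ j, b j * φ j t)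
      = ∫ t, (e t ^ 2 + ((2 * (e t * ∑ j, b j * φ j t)) + (∑ j, b j * φ j t) ^ 2)) ∂μ := by
        rw [l2normSq]
        exact integral_congr_ae (Filter.Eventually.of_forall fun t => hexp t)
    _ = (∫ t, e t ^ 2 ∂μ) + ((∫ t, 2 * (e t * ∑ j, b j * φ j t) ∂μ)
          + ∫ t, (∑ j, b j * φ j t) ^ 2 ∂μ) := by
        have hg : Integrable
            (fun t => 2 * (e t * ∑ j, b j * φ j t) + (∑ j, b j * φ j t) ^ 2) μ :=
          (hIeS.const_mul 2).add hIS2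
        rw [integral_add hIe2 hg, integral_add (hIeS.const_mul 2) hIS2]
    _ = l2normSq μ e + ∑ j, b j ^ 2 := by
        rw [integral_const_mul, hcross, hsq, l2normSq]
        ring

lemma keyA (μ : Measure X) {m n : ℕ}
    (w : X → ℝ) (hw : ∀ t, 0 ≤ w t)
    (φ : Fin m → X → ℝ) (hφ2 : ∀ j, MemLp (φ j) 2 μ)
    (hortho : ∀ i j, (∫ t, φ i t * φ j t ∂μ) = if i = j then (1 : ℝ) else 0)
    (u : X → ℝ) (hu2 : MemLp u 2 μ) {δ : ℝ} (hδ1 : δ < 1)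
    (y : Fin n → X) (hZ : Zstat w φ y ≤ δ)
    (q : X → ℝ) (hq : q ∈ Vspan φ)
    (hminq : ∀ g ∈ Vspan φ, discNormSq w y (u - q) ≤ discNormSq w y (u - g)) :
    l2normSq μ (u - q) ≤ l2normSq μ (u - proj μ φ u)
      + (1 - δ)⁻¹ * discNormSq w y (u - proj μ φ u) := by
  obtain ⟨c, hc⟩ := (Submodule.mem_span_range_iff_exists_fun ℝ).mp hq
  set a : Fin m → ℝ := fun j => ∫ s, u s * φ j s ∂μ with ha
  set b : Fin m → ℝ := fun j => a j - c j with hb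
  have hqt : ∀ t, q t = ∑ j, c j * φ j t := by
    intro t
    rw [← hc]
    simp [Finset.sum_apply]
  have hPmem : proj μ φ u ∈ Vspan φ := by
    have : proj μ φ u = ∑ j, a j • φ j := by
      funext t
      simp [proj, Finset.sum_apply, ha]
    rw [this]
    exact Submodule.sum_mem _ fun j _ =>
      Submodule.smul_mem _ _ (Submodule.subset_span (Set.mem_range_self j))
  -- L² Pythagoras
  have hfun : u - q = fun t => (u - proj μ φ u) t + ∑ j, b j * φ j t := by
    funext t
    simp only [Pi.sub_apply, proj, hb, ha]
    rw [hqt t]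
    rw [Finset.sum_congr rfl fun j (_ : j ∈ Finset.univ) =>
      (sub_mul (a j) (c j) (φ j t) : (a j - c j) * φ j t = a j * φ j t - c j * φ j t)]
    rw [Finset.sum_sub_distrib]
    simp only [ha]
    ring
  have hl2 : l2normSq μ (u - q) = l2normSq μ (u - proj μ φ u) + ∑ j, b j ^ 2 := by
    rw [hfun]
    exact l2_pyth μ φ hφ2 hortho u hu2 b
  -- discrete part
  have hdp : discNormSq w y (proj μ φ u - q) ≤ discNormSq w y (u - proj μ φ u) :=
    disc_pyth hw y φ u q (proj μ φ u) hq hPmem hminq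
  have hfun2 : proj μ φ u - q = fun t => ∑ j, b j * φ j t := by
    funext t
    simp only [Pi.sub_apply, proj, hb, ha]
    rw [hqt t]
    rw [Finset.sum_congr rfl fun j (_ : j ∈ Finset.univ) =>
      (sub_mul (a j) (c j) (φ j t) : (a j - c j) * φ j t = a j * φ j t - c j * φ j t)]
    rw [Finset.sum_sub_distrib]
  have hcombo : discNormSq w y (proj μ φ u - q)
      = ∑ j, ∑ k, b j * b k * gram w φ y j k := by
    rw [hfun2]
    exact disc_combo w y φ b
  have hgb := gram_lb w φ y hZ b
  have h1δ : (0:ℝ) < 1 - δ := by linarith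
  have hbb : ∑ j, b j ^ 2 ≤ (1 - δ)⁻¹ * discNormSq w y (u - proj μ φ u) := by
    rw [inv_mul_eq_div, le_div_iff₀ h1δ]
    calc (∑ j, b j ^ 2) * (1 - δ) = (1 - δ) * ∑ j, b j ^ 2 := by ring
      _ ≤ ∑ j, ∑ k, b j * b k * gram w φ y j k := hgb
      _ = discNormSq w y (proj μ φ u - q) := hcombo.symm
      _ ≤ discNormSq w y (u - proj μ φ u) := hdp
  rw [hl2]
  linarith

end L2Aux

section MeasAux

variable {X : Set (Fin d → ℝ)}

lemma eval_measurePreserving {ι : Type*} [Fintype ι] {β : ι → Type*}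
    [∀ i, MeasurableSpace (β i)] (μ : ∀ i, Measure (β i)) [∀ i, IsProbabilityMeasure (μ i)]
    (i : ι) : MeasurePreserving (Function.eval i) (Measure.pi μ) (μ i) := by
  classical
  refine ⟨measurable_pi_apply i, ?_⟩
  ext s hs
  rw [Measure.map_apply (measurable_pi_apply i) hs, Set.eval_preimage, Measure.pi_pi]
  rw [Finset.prod_eq_single i (fun j _ hj => by rw [Function.update_of_ne hj]; exact measure_univ)
    (fun h => absurd (Finset.mem_univ i) h)]
  rw [Function.update_self]

lemma measurable_sel {α : Type*} [MeasurableSpace α] {M : ℕ} (I : (Fin M → α) → Fin M)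
    (hI : Measurable I) : Measurable fun ω : Fin M → α => ω (I ω) := by
  intro S hS
  have h : (fun ω : Fin M → α => ω (I ω)) ⁻¹' S
      = ⋃ k, I ⁻¹' {k} ∩ (fun ω : Fin M → α => ω k) ⁻¹' S := by
    ext ω
    simp only [Set.mem_preimage, Set.mem_iUnion, Set.mem_inter_iff, Set.mem_singleton_iff]
    exact ⟨fun h => ⟨I ω, rfl, h⟩, fun ⟨k, hk, h⟩ => by rwa [hk]⟩
  rw [h]
  exact MeasurableSet.iUnion fun k =>
    (hI (MeasurableSet.singleton k)).inter (measurable_pi_apply k hS)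

lemma measurable_Zstat {m n : ℕ} (w : X → ℝ) (hwm : Measurable w)
    (φ : Fin m → X → ℝ) (hφm : ∀ j, Measurable (φ j)) :
    Measurable fun y : Fin n → X => Zstat w φ y := by
  classical
  let L : (Fin m → Fin m → ℝ) →ₗ[ℝ]
      (EuclideanSpace ℝ (Fin m) →L[ℝ] EuclideanSpace ℝ (Fin m)) :=
    { toFun := fun g => Matrix.toEuclideanCLM (𝕜 := ℝ) (Matrix.of g)
      map_add' := fun A B => by
        show Matrix.toEuclideanCLM (𝕜 := ℝ) (Matrix.of (A + B))
          = Matrix.toEuclideanCLM (𝕜 := ℝ) (Matrix.of A)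
            + Matrix.toEuclideanCLM (𝕜 := ℝ) (Matrix.of B)
        rw [show (Matrix.of (A + B) : Matrix (Fin m) (Fin m) ℝ)
          = Matrix.of A + Matrix.of B from rfl, map_add]
      map_smul' := fun c A => by
        show Matrix.toEuclideanCLM (𝕜 := ℝ) (Matrix.of (c • A))
          = (RingHom.id ℝ) c • Matrix.toEuclideanCLM (𝕜 := ℝ) (Matrix.of A)
        rw [show (Matrix.of (c • A) : Matrix (Fin m) (Fin m) ℝ)
          = c • Matrix.of A from rfl, _root_.map_smul]
        rfl }
  have hL : Continuous fun g : Fin m → Fin m → ℝ => L g := L.continuous_of_finiteDimensional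
  have hcont : Continuous fun g : Fin m → Fin m → ℝ =>
      ‖L g - Matrix.toEuclideanCLM (𝕜 := ℝ) (1 : Matrix (Fin m) (Fin m) ℝ)‖ :=
    (hL.sub continuous_const).norm
  have hent : Measurable fun y : Fin n → X =>
      (fun j k => (1 / (n : ℝ)) * ∑ i, w (y i) * (φ j (y i) * φ k (y i)) : Fin m → Fin m → ℝ) := by
    apply measurable_pi_lambda
    intro j
    apply measurable_pi_lambda
    intro k
    apply Measurable.const_mul
    apply Finset.measurable_sum
    intro i _
    exact (hwm.comp (measurable_pi_apply i)).mul
      (((hφm j).comp (measurable_pi_apply i)).mul ((hφm k).comp (measurable_pi_apply i)))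
  have heq : (fun y : Fin n → X => Zstat w φ y)
      = fun y : Fin n → X =>
        ‖L (fun j k => (1 / (n : ℝ)) * ∑ i, w (y i) * (φ j (y i) * φ k (y i)))
          - Matrix.toEuclideanCLM (𝕜 := ℝ) (1 : Matrix (Fin m) (Fin m) ℝ)‖ := by
    funext y
    rw [Zstat, specNorm]
    rw [show (Matrix.toEuclideanCLM (𝕜 := ℝ) (gram w φ y - 1))
        = Matrix.toEuclideanCLM (𝕜 := ℝ) (gram w φ y)
          - Matrix.toEuclideanCLM (𝕜 := ℝ) (1 : Matrix (Fin m) (Fin m) ℝ) from map_sub _ _ _]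
    rfl
  rw [heq]
  exact hcont.measurable.comp hent

lemma measurable_discNormSq {n : ℕ} (w : X → ℝ) (hwm : Measurable w)
    (v : X → ℝ) (hvm : Measurable v) :
    Measurable fun y : Fin n → X => discNormSq w y v := by
  simp only [discNormSq]
  apply Measurable.const_mul
  apply Finset.measurable_sum
  intro i _
  exact (hwm.comp (measurable_pi_apply i)).mul
    (((hvm.comp (measurable_pi_apply i)).pow_const 2))

end MeasAux

set_option maxHeartbeats 1000000 in
set_option synthInstance.maxHeartbeats 400000 in
/-- quasi-optimality in expectation of the boosted weighted least-squares
projection. -/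
theorem boosted_lsq_quasi_optimality
    {m n M : ℕ} (hM : 0 < M) {X : Set (Fin d → ℝ)} (μ : Measure X) [IsProbabilityMeasure μ]
    (w : X → ℝ) (hw : ∀ t, 0 < w t) (hwm : Measurable w)
    (ρ : Measure X) [IsProbabilityMeasure ρ]
    (hρ : ρ = μ.withDensity fun t => ENNReal.ofReal (w t)⁻¹)
    (φ : Fin m → X → ℝ) (hφm : ∀ j, Measurable (φ j)) (hφ2 : ∀ j, MemLp (φ j) 2 μ)
    (hortho : ∀ i j, (∫ t, φ i t * φ j t ∂μ) = if i = j then (1 : ℝ) else 0)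
    (δ η : ℝ) (hδ0 : 0 < δ) (hδ1 : δ < 1) (hη0 : 0 < η) (hη1 : η < 1)
    (hPZ : (Measure.pi fun _ : Fin n => ρ) {y | δ < Zstat w φ y} ≤ ENNReal.ofReal η)
    (Istar : (Fin M → Fin n → X) → Fin M) (hIm : Measurable Istar)
    (hmin : ∀ (ω : Fin M → Fin n → X) (i : Fin M),
      Zstat w φ (ω (Istar ω)) ≤ Zstat w φ (ω i))
    (hexch : ∀ σ : Equiv.Perm (Fin M),
      Measure.map (fun ω : Fin M → Fin n → X => ((fun i => ω (σ i)), σ.symm (Istar ω)))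
          (bigP ρ M n) =
        Measure.map (fun ω => (ω, Istar ω)) (bigP ρ M n))
    (u : X → ℝ) (hum : Measurable u) (hu2 : MemLp u 2 μ)
    (Q : (Fin n → X) → X → ℝ)
    (hQ : ∀ y : Fin n → X, Q y ∈ Vspan φ ∧
      ∀ g ∈ Vspan φ, discNormSq w y (u - Q y) ≤ discNormSq w y (u - g)) :
    (∫ ω, l2normSq μ (u - Q (ω (Istar ω)))
        ∂((bigP ρ M n)[|{ω | Zstat w φ (ω (Istar ω)) ≤ δ}])) ≤
      (1 + (1 - δ)⁻¹ * (1 - η ^ M)⁻¹ * M) * l2normSq μ (u - proj μ φ u) := by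
  classical
  set e : X → ℝ := u - proj μ φ u with he
  set L : ℝ := l2normSq μ e with hL
  have hw0 : ∀ t, 0 ≤ w t := fun t => (hw t).le
  have hem : Measurable e := by
    apply hum.sub
    exact Finset.measurable_sum _ fun j _ => (hφm j).const_mul _
  have he2 : MemLp e 2 μ := hu2.sub (memL2_proj μ φ hφ2 u)
  have hL0 : 0 ≤ L := integral_nonneg fun t => sq_nonneg _
  -- measures and instances
  set ρn : Measure (Fin n → X) := Measure.pi fun _ : Fin n => ρ with hρn
  haveI : IsProbabilityMeasure ρn := by rw [hρn]; infer_instance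
  have hbigP : bigP ρ M n = Measure.pi fun _ : Fin M => ρn := rfl
  haveI hPP : IsProbabilityMeasure (bigP ρ M n) := by rw [hbigP]; infer_instance
  -- pointwise integrand g on X
  set g : X → ℝ := fun x => w x * e x ^ 2 with hg
  have hgm : Measurable g := hwm.mul (hem.pow_const 2)
  have hgint : Integrable g ρ := by
    have hfme : Measurable fun t : X => ENNReal.ofReal (w t)⁻¹ :=
      ENNReal.measurable_ofReal.comp hwm.inv
    rw [hρ, integrable_withDensity_iff hfme
      (Filter.Eventually.of_forall fun x => ENNReal.ofReal_lt_top)]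
    have : (fun x => g x * (ENNReal.ofReal (w x)⁻¹).toReal) = fun x => e x ^ 2 := by
      funext x
      rw [ENNReal.toReal_ofReal (inv_nonneg.mpr (hw0 x))]
      rw [hg]
      field_simp [(hw x).ne']
    rw [this]
    exact he2.integrable_sq
  have hgval : ∫ x, g x ∂ρ = L := by
    rw [hρ]
    have hfme : Measurable fun t : X => (w t)⁻¹.toNNReal :=
      measurable_real_toNNReal.comp hwm.inv
    rw [show (fun t => ENNReal.ofReal (w t)⁻¹)
        = (fun t => (((w t)⁻¹.toNNReal : NNReal) : ENNReal)) from rfl]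
    rw [integral_withDensity_eq_integral_smul hfme g]
    rw [hL, l2normSq]
    congr 1
    funext x
    rw [NNReal.smul_def, Real.coe_toNNReal _ (inv_nonneg.mpr (hw0 x)), hg]
    rw [smul_eq_mul]
    field_simp [(hw x).ne']
  -- the discrete norm as a function of the sample
  set D : (Fin n → X) → ℝ := fun y => discNormSq w y e with hD
  have hDm : Measurable D := measurable_discNormSq w hwm e hem
  have hD0 : ∀ y, 0 ≤ D y := fun y => discNormSq_nonneg hw0 y e
  have hci : ∀ i : Fin n, Integrable (fun y : Fin n → X => g (y i)) ρn := fun i =>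
    ((eval_measurePreserving (fun _ : Fin n => ρ) i).integrable_comp
      hgm.aestronglyMeasurable).mpr hgint
  have hDint : Integrable D ρn := by
    have : D = fun y => (1 / (n : ℝ)) * ∑ i, g (y i) := rfl
    rw [this]
    exact (integrable_finset_sum _ fun i _ => hci i).const_mul _
  have hDval : ∫ y, D y ∂ρn ≤ L := by
    have h1 : ∫ y, D y ∂ρn = (1 / (n : ℝ)) * ∑ i : Fin n, ∫ x, g x ∂ρ := by
      have : D = fun y => (1 / (n : ℝ)) * ∑ i, g (y i) := rfl
      rw [this, integral_const_mul, integral_finset_sum _ fun i _ => hci i]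
      congr 1
      refine Finset.sum_congr rfl fun i _ => ?_
      have hmp := eval_measurePreserving (fun _ : Fin n => ρ) i
      calc (∫ y : Fin n → X, g (y i) ∂ρn)
          = ∫ x, g x ∂(Measure.map (Function.eval i) ρn) :=
            (integral_map (measurable_pi_apply i).aemeasurable
              hgm.aestronglyMeasurable).symm
        _ = ∫ x, g x ∂ρ := by rw [hmp.map_eq]
    rw [h1, hgval]
    rcases Nat.eq_zero_or_pos n with hn | hn
    · subst hn
      simp [hL0]
    · have : (1 / (n : ℝ)) * ∑ _i : Fin n, L = L := by
        rw [Finset.sum_const, Finset.card_univ, Fintype.card_fin, nsmul_eq_mul]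
        field_simp
      rw [this]
  -- the event
  set A : Set (Fin M → Fin n → X) := {ω | Zstat w φ (ω (Istar ω)) ≤ δ} with hA
  have hsel : Measurable fun ω : Fin M → Fin n → X => ω (Istar ω) := measurable_sel Istar hIm
  have hZm : Measurable fun y : Fin n → X => Zstat w φ y := measurable_Zstat w hwm φ hφm
  have hAmeas : MeasurableSet A := measurableSet_le (hZm.comp hsel) measurable_const
  -- the selected-sample discrete norm
  set Hd : (Fin M → Fin n → X) → ℝ := fun ω => D (ω (Istar ω)) with hHd
  have hHdm : Measurable Hd := hDm.comp hsel
  have hHd0 : ∀ ω, 0 ≤ Hd ω := fun ω => hD0 _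
  have hcoordint : ∀ k : Fin M, Integrable (fun ω : Fin M → Fin n → X => D (ω k)) (bigP ρ M n) := by
    intro k
    have h := ((eval_measurePreserving (fun _ : Fin M => ρn) k).integrable_comp
      hDm.aestronglyMeasurable).mpr hDint
    rw [hbigP]
    exact h
  have hsum_int : Integrable (fun ω : Fin M → Fin n → X => ∑ k, D (ω k)) (bigP ρ M n) :=
    integrable_finset_sum _ fun k _ => hcoordint k
  have hHd_le : ∀ ω, Hd ω ≤ ∑ k, D (ω k) := by
    intro ω
    exact Finset.single_le_sum (f := fun k => D (ω k)) (fun k _ => hD0 _)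
      (Finset.mem_univ (Istar ω))
  have hHdint : Integrable Hd (bigP ρ M n) := by
    refine hsum_int.mono' hHdm.aestronglyMeasurable (Filter.Eventually.of_forall fun ω => ?_)
    rw [Real.norm_eq_abs, abs_of_nonneg (hHd0 ω)]
    exact hHd_le ω
  have hsum_val : ∫ ω, (∑ k, D (ω k)) ∂(bigP ρ M n) = M * ∫ y, D y ∂ρn := by
    rw [integral_finset_sum _ fun k _ => hcoordint k]
    have : ∀ k : Fin M, (∫ ω : Fin M → Fin n → X, D (ω k) ∂(bigP ρ M n)) = ∫ y, D y ∂ρn := by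
      intro k
      have hmp := eval_measurePreserving (fun _ : Fin M => ρn) k
      rw [hbigP]
      calc (∫ ω : Fin M → Fin n → X, D (ω k) ∂(Measure.pi fun _ : Fin M => ρn))
          = ∫ y, D y ∂(Measure.map (Function.eval k) (Measure.pi fun _ : Fin M => ρn)) :=
            (integral_map (measurable_pi_apply k).aemeasurable hDm.aestronglyMeasurable).symm
        _ = ∫ y, D y ∂ρn := by rw [hmp.map_eq]
    rw [Finset.sum_congr rfl fun k _ => this k, Finset.sum_const, Finset.card_univ,
      Fintype.card_fin, nsmul_eq_mul]
  have hHd_val : ∫ ω, Hd ω ∂(bigP ρ M n) ≤ M * L := by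
    calc (∫ ω, Hd ω ∂(bigP ρ M n)) ≤ ∫ ω, (∑ k, D (ω k)) ∂(bigP ρ M n) :=
          integral_mono hHdint hsum_int hHd_le
      _ = M * ∫ y, D y ∂ρn := hsum_val
      _ ≤ M * L := by
          apply mul_le_mul_of_nonneg_left hDval (by positivity)
  -- probability of the event
  have hηM : η ^ M < 1 := pow_lt_one₀ hη0.le hη1 hM.ne'
  have hηM0 : 0 ≤ η ^ M := pow_nonneg hη0.le M
  set B : Set (Fin n → X) := {y | δ < Zstat w φ y} with hB
  have hBmeas : MeasurableSet B := measurableSet_lt measurable_const hZm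
  have hAc_sub : Aᶜ ⊆ Set.pi Set.univ fun _ : Fin M => B := by
    intro ω hω k _
    have h1 : δ < Zstat w φ (ω (Istar ω)) := not_le.mp hω
    exact lt_of_lt_of_le h1 (hmin ω k)
  have hPAc : bigP ρ M n Aᶜ ≤ ENNReal.ofReal (η ^ M) := by
    calc bigP ρ M n Aᶜ ≤ bigP ρ M n (Set.pi Set.univ fun _ : Fin M => B) :=
          measure_mono hAc_sub
      _ = ∏ _k : Fin M, ρn B := by rw [hbigP, Measure.pi_pi]
      _ ≤ ∏ _k : Fin M, ENNReal.ofReal η := Finset.prod_le_prod' fun k _ => hPZ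
      _ = ENNReal.ofReal η ^ M := by rw [Finset.prod_const, Finset.card_univ, Fintype.card_fin]
      _ = ENNReal.ofReal (η ^ M) := by rw [ENNReal.ofReal_pow hη0.le]
  have hPA_lb : ENNReal.ofReal (1 - η ^ M) ≤ bigP ρ M n A := by
    have hcompl : bigP ρ M n A = 1 - bigP ρ M n Aᶜ := by
      rw [prob_compl_eq_one_sub hAmeas, ENNReal.sub_sub_cancel (by norm_num) prob_le_one]
    rw [hcompl]
    calc ENNReal.ofReal (1 - η ^ M) = 1 - ENNReal.ofReal (η ^ M) := by
          rw [ENNReal.ofReal_sub _ hηM0, ENNReal.ofReal_one]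
      _ ≤ 1 - bigP ρ M n Aᶜ := tsub_le_tsub_left hPAc 1
  have hPA0 : bigP ρ M n A ≠ 0 := by
    refine fun h => absurd (h ▸ hPA_lb) ?_
    simp only [nonpos_iff_eq_zero, ENNReal.ofReal_eq_zero, not_le]
    linarith
  have hPA_toReal : 1 - η ^ M ≤ (bigP ρ M n A).toReal := by
    calc 1 - η ^ M = (ENNReal.ofReal (1 - η ^ M)).toReal :=
          (ENNReal.toReal_ofReal (by linarith)).symm
      _ ≤ (bigP ρ M n A).toReal := ENNReal.toReal_mono (measure_ne_top _ _) hPA_lb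
  -- conditional measure
  haveI hPPfin : IsFiniteMeasure (bigP ρ M n) := inferInstance
  haveI hν : IsProbabilityMeasure ((bigP ρ M n)[|A]) := cond_isProbabilityMeasure hPA0
  haveI hνfin : IsFiniteMeasure ((bigP ρ M n)[|A]) := inferInstance
  have hHdν_int : Integrable Hd ((bigP ρ M n)[|A]) := by
    rw [ProbabilityTheory.cond]
    exact (hHdint.restrict).smul_measure (ENNReal.inv_ne_top.mpr hPA0)
  have hae : ∀ᵐ ω ∂((bigP ρ M n)[|A]), ω ∈ A := by
    rw [ProbabilityTheory.cond]
    exact Measure.ae_smul_measure (ae_restrict_mem hAmeas) _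
  -- pointwise bound on the event
  have hFG : ∀ ω ∈ A, l2normSq μ (u - Q (ω (Istar ω))) ≤ L + (1 - δ)⁻¹ * Hd ω := by
    intro ω hω
    exact keyA μ w hw0 φ hφ2 hortho u hu2 hδ1 (ω (Istar ω)) hω (Q (ω (Istar ω)))
      (hQ (ω (Istar ω))).1 (hQ (ω (Istar ω))).2
  have hGint : Integrable (fun ω => L + (1 - δ)⁻¹ * Hd ω) ((bigP ρ M n)[|A]) :=
    (integrable_const L).add (hHdν_int.const_mul _)
  have hstep1 : (∫ ω, l2normSq μ (u - Q (ω (Istar ω))) ∂((bigP ρ M n)[|A]))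
      ≤ ∫ ω, (L + (1 - δ)⁻¹ * Hd ω) ∂((bigP ρ M n)[|A]) := by
    refine integral_mono_of_nonneg
      (Filter.Eventually.of_forall fun ω => integral_nonneg fun t => sq_nonneg _) hGint ?_
    exact hae.mono fun ω hω => hFG ω hω
  have hstep2 : (∫ ω, (L + (1 - δ)⁻¹ * Hd ω) ∂((bigP ρ M n)[|A]))
      = L + (1 - δ)⁻¹ * ∫ ω, Hd ω ∂((bigP ρ M n)[|A]) := by
    rw [integral_add (integrable_const L) (hHdν_int.const_mul _), integral_const,
      integral_const_mul, probReal_univ, smul_eq_mul, one_mul]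
  have hstep3 : (∫ ω, Hd ω ∂((bigP ρ M n)[|A]))
      = (bigP ρ M n A).toReal⁻¹ * ∫ ω in A, Hd ω ∂(bigP ρ M n) := by
    rw [ProbabilityTheory.cond, integral_smul_measure, ENNReal.toReal_inv]
    rfl
  have hsetint : (∫ ω in A, Hd ω ∂(bigP ρ M n)) ≤ M * L := by
    calc (∫ ω in A, Hd ω ∂(bigP ρ M n)) ≤ ∫ ω, Hd ω ∂(bigP ρ M n) :=
          setIntegral_le_integral hHdint (Filter.Eventually.of_forall fun ω => hHd0 ω)
      _ ≤ M * L := hHd_val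
  have hsetint0 : 0 ≤ ∫ ω in A, Hd ω ∂(bigP ρ M n) :=
    setIntegral_nonneg hAmeas fun ω _ => hHd0 ω
  -- inverse probability bound
  have h1ηM : (0:ℝ) < 1 - η ^ M := by linarith
  have hinv : (bigP ρ M n A).toReal⁻¹ ≤ (1 - η ^ M)⁻¹ := by
    apply inv_anti₀ h1ηM hPA_toReal
  have h1δ : (0:ℝ) < 1 - δ := by linarith
  -- final chain
  have hHdν_int_val : (∫ ω, Hd ω ∂((bigP ρ M n)[|A])) ≤ (1 - η ^ M)⁻¹ * (M * L) := by
    rw [hstep3]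
    calc (bigP ρ M n A).toReal⁻¹ * ∫ ω in A, Hd ω ∂(bigP ρ M n)
        ≤ (1 - η ^ M)⁻¹ * ∫ ω in A, Hd ω ∂(bigP ρ M n) :=
          mul_le_mul_of_nonneg_right hinv hsetint0
      _ ≤ (1 - η ^ M)⁻¹ * (M * L) := by
          apply mul_le_mul_of_nonneg_left hsetint (by positivity)
  calc (∫ ω, l2normSq μ (u - Q (ω (Istar ω))) ∂((bigP ρ M n)[|A]))
      ≤ L + (1 - δ)⁻¹ * ∫ ω, Hd ω ∂((bigP ρ M n)[|A]) := by rw [← hstep2]; exact hstep1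
    _ ≤ L + (1 - δ)⁻¹ * ((1 - η ^ M)⁻¹ * (M * L)) := by
        have := mul_le_mul_of_nonneg_left hHdν_int_val (le_of_lt (inv_pos.mpr h1δ))
        linarith
    _ = (1 + (1 - δ)⁻¹ * (1 - η ^ M)⁻¹ * M) * L := by ring
end
end
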